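/- arXiv:1911.12778 — 6 statements merged into one kernel-verified Lean document; each statement's English description precedes it below -/
import Mathlib

section
/- Let (X,d) be a metric space, let S ⊆ X be a finite server set, and let c_1,…,c_m ∈ X be clients with m ≤ |S|. Let 1 ≤ t < m and let f : {1,…,t} → S be an optimal matching of the first t clients into S. Then there exists an optimal matching g : {1,…,m} → S of all m clients into S such that range(f) ⊆ range(g); consequently |range(g) \ range(f)| = m − t. -/
/-- A matching of the first `t` clients (indexed `1,…,t`) into the server set `S`:
an injective assignment whose values on `{1,…,t}` are servers in `S`. -/
def IsMatching {X : Type*} [MetricSpace X] (S : Finset X) (t : ℕ) (f : ℕ → X) : Prop :=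
  Set.InjOn f (Set.Icc 1 t) ∧ ∀ j ∈ Set.Icc 1 t, f j ∈ S

/-- The cost of a matching `f` of the first `t` clients `c 1, …, c t`. -/
noncomputable def matchingCost {X : Type*} [MetricSpace X] (t : ℕ) (c f : ℕ → X) : ℝ :=
  ∑ j ∈ Finset.Icc 1 t, dist (c j) (f j)

/-- `OPT S t c` is the minimum cost of a matching of the first `t` clients into `S`. -/
noncomputable def OPT {X : Type*} [MetricSpace X] (S : Finset X) (t : ℕ) (c : ℕ → X) : ℝ :=
  sInf {r : ℝ | ∃ f : ℕ → X, IsMatching S t f ∧ matchingCost t c f = r}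

section Aux
variable {X : Type*} [MetricSpace X] (S : Finset X) (c : ℕ → X)

lemma costSet_finite (m : ℕ) :
    {r : ℝ | ∃ f : ℕ → X, IsMatching S m f ∧ matchingCost m c f = r}.Finite := by
  apply Set.Finite.subset (Set.finite_range
    (fun σ : (Finset.Icc 1 m) → S => ∑ j ∈ (Finset.Icc 1 m).attach, dist (c j) (σ j : X)))
  rintro r ⟨f, hf, rfl⟩
  refine ⟨fun j => ⟨f j, hf.2 j (by simpa [Set.mem_Icc] using Finset.mem_Icc.mp j.2)⟩, ?_⟩
  simp only [matchingCost]
  rw [← Finset.sum_attach (Finset.Icc 1 m) (fun j => dist (c j) (f j))]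

lemma costSet_nonempty (m : ℕ) (hm : m ≤ S.card) :
    {r : ℝ | ∃ f : ℕ → X, IsMatching S m f ∧ matchingCost m c f = r}.Nonempty := by
  set l := S.toList with hl
  have hlen : m ≤ l.length := by simpa [hl, Finset.length_toList] using hm
  refine ⟨_, fun j => l.getD (j-1) (c 0), ⟨?_, ?_⟩, rfl⟩
  · intro a ha b hb hab
    simp only [Set.mem_Icc] at ha hb
    have ha' : a - 1 < l.length := lt_of_lt_of_le (by omega) hlen
    have hb' : b - 1 < l.length := lt_of_lt_of_le (by omega) hlen
    dsimp only at hab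
    rw [List.getD_eq_getElem _ _ ha', List.getD_eq_getElem _ _ hb'] at hab
    have := (List.Nodup.getElem_inj_iff (S.nodup_toList)).mp hab
    omega
  · intro j hj
    simp only [Set.mem_Icc] at hj
    have hj' : j - 1 < l.length := lt_of_lt_of_le (by omega) hlen
    dsimp only
    rw [List.getD_eq_getElem _ _ hj']
    exact Finset.mem_toList.mp (List.getElem_mem hj')

lemma opt_le {m : ℕ} {g : ℕ → X} (hg : IsMatching S m g) :
    OPT S m c ≤ matchingCost m c g :=
  csInf_le (costSet_finite S c m).bddBelow ⟨g, hg, rfl⟩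

lemma exists_opt (m : ℕ) (hm : m ≤ S.card) :
    ∃ g : ℕ → X, IsMatching S m g ∧ matchingCost m c g = OPT S m c := by
  have := (costSet_nonempty S c m hm).csInf_mem (costSet_finite S c m)
  obtain ⟨g, hg, hcost⟩ := this
  exact ⟨g, hg, hcost⟩

end Aux

/-- Let `f` be an optimal matching of the first `t` clients into `S`, and let `t < m ≤ |S|`.
Then there is an optimal matching `g` of the first `m` clients into `S` whose image extends
the image of `f`; consequently `|range g \ range f| = m − t`. -/
theorem stmt5 {X : Type*} [MetricSpace X] (S : Finset X) (c : ℕ → X) (m t : ℕ)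
    (hm : m ≤ S.card) (ht1 : 1 ≤ t) (htm : t < m)
    (f : ℕ → X) (hf : IsMatching S t f) (hfopt : matchingCost t c f = OPT S t c) :
    ∃ g : ℕ → X, IsMatching S m g ∧ matchingCost m c g = OPT S m c ∧
      f '' Set.Icc 1 t ⊆ g '' Set.Icc 1 m ∧
      (g '' Set.Icc 1 m \ f '' Set.Icc 1 t).ncard = m - t := by
  classical
  obtain ⟨g0, hg0, hg0opt⟩ := exists_opt S c m hm
  have htm' : Set.Icc 1 t ⊆ Set.Icc (1:ℕ) m := Set.Icc_subset_Icc le_rfl htm.le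
  -- the alternating-path relation and the reachable set J
  set R : ℕ → ℕ → Prop := fun i j => i ∈ Set.Icc 1 t ∧ j ∈ Set.Icc 1 t ∧ g0 i = f j with hR
  set J : Set ℕ :=
    {j | ∃ j0 ∈ Set.Icc 1 t, f j0 ∉ g0 '' Set.Icc 1 m ∧ Relation.ReflTransGen R j0 j} with hJ
  have hJsub : J ⊆ Set.Icc 1 t := by
    rintro j ⟨j0, hj0, hns, hr⟩
    rcases hr.cases_tail with rfl | ⟨i, _, hRij⟩
    · exact hj0
    · exact hRij.2.1
  have hJnext : ∀ i ∈ J, ∀ j, R i j → j ∈ J := by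
    rintro i ⟨j0, hj0, hns, hr⟩ j hRij
    exact ⟨j0, hj0, hns, hr.tail hRij⟩
  have hJsrc : ∀ j ∈ Set.Icc 1 t, f j ∉ g0 '' Set.Icc 1 m → j ∈ J := by
    intro j hj hns
    exact ⟨j, hj, hns, Relation.ReflTransGen.refl⟩
  have hJback : ∀ j ∈ J, f j ∉ g0 '' Set.Icc 1 m ∨ ∃ i ∈ J, g0 i = f j := by
    rintro j ⟨j0, hj0, hns, hr⟩
    rcases hr.cases_tail with rfl | ⟨i, hri, hRij⟩
    · exact Or.inl hns
    · exact Or.inr ⟨i, ⟨j0, hj0, hns, hri⟩, hRij.2.2⟩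
  set g : ℕ → X := fun j => if j ∈ J then f j else g0 j with hg
  set f' : ℕ → X := fun j => if j ∈ J then g0 j else f j with hf'
  -- g is a matching
  have hgmem : ∀ j ∈ Set.Icc 1 m, g j ∈ S := by
    intro j hj
    by_cases h : j ∈ J <;> simp only [hg, h, if_pos, if_neg, if_true, if_false]
    · exact hf.2 j (hJsub h)
    · exact hg0.2 j hj
  have hginj : Set.InjOn g (Set.Icc 1 m) := by
    intro a ha b hb hab
    simp only [hg] at hab
    by_cases hA : a ∈ J <;> by_cases hB : b ∈ J
    · rw [if_pos hA, if_pos hB] at hab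
      exact hf.1 (hJsub hA) (hJsub hB) hab
    · rw [if_pos hA, if_neg hB] at hab
      exfalso
      rcases hJback a hA with hns | ⟨i, hiJ, hi⟩
      · exact hns ⟨b, hb, hab.symm⟩
      · have : i = b := hg0.1 (htm' (hJsub hiJ)) hb (by rw [hi, hab])
        exact hB (this ▸ hiJ)
    · rw [if_neg hA, if_pos hB] at hab
      exfalso
      rcases hJback b hB with hns | ⟨i, hiJ, hi⟩
      · exact hns ⟨a, ha, hab⟩
      · have : i = a := hg0.1 (htm' (hJsub hiJ)) ha (by rw [hi, hab])
        exact hA (this ▸ hiJ)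
    · rw [if_neg hA, if_neg hB] at hab
      exact hg0.1 ha hb hab
  have hgmatch : IsMatching S m g := ⟨hginj, hgmem⟩
  -- f' is a matching of the first t clients
  have hf'match : IsMatching S t f' := by
    constructor
    · intro a ha b hb hab
      simp only [hf'] at hab
      by_cases hA : a ∈ J <;> by_cases hB : b ∈ J
      · rw [if_pos hA, if_pos hB] at hab
        exact hg0.1 (htm' ha) (htm' hb) hab
      · rw [if_pos hA, if_neg hB] at hab
        exact absurd (hJnext a hA b ⟨hJsub hA, hb, hab⟩) hB
      · rw [if_neg hA, if_pos hB] at hab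
        exact absurd (hJnext b hB a ⟨hJsub hB, ha, hab.symm⟩) hA
      · rw [if_neg hA, if_neg hB] at hab
        exact hf.1 ha hb hab
    · intro j hj
      by_cases h : j ∈ J <;> simp only [hf', h, if_true, if_false]
      · exact hg0.2 j (htm' hj)
      · exact hf.2 j hj
  -- image containment
  have himg : f '' Set.Icc 1 t ⊆ g '' Set.Icc 1 m := by
    rintro x ⟨j, hj, rfl⟩
    by_cases h : j ∈ J
    · exact ⟨j, htm' hj, by simp [hg, h]⟩
    · have hin : f j ∈ g0 '' Set.Icc 1 m := by
        by_contra hns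
        exact h (hJsrc j hj hns)
      obtain ⟨i, hi, hgi⟩ := hin
      have hiJ : i ∉ J := by
        intro hiJ
        exact h (hJnext i hiJ j ⟨hJsub hiJ, hj, hgi⟩)
      exact ⟨i, hi, by simp [hg, hiJ, hgi]⟩
  -- cost bookkeeping
  set D : Finset ℕ := (Finset.Icc 1 t).filter (· ∈ J) with hD
  have hDt : D ⊆ Finset.Icc 1 t := Finset.filter_subset _ _
  have hDm : D ⊆ Finset.Icc 1 m := hDt.trans (Finset.Icc_subset_Icc le_rfl htm.le)
  have hmemD : ∀ j, j ∈ D ↔ j ∈ J := by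
    intro j
    simp only [hD, Finset.mem_filter, Finset.mem_Icc]
    constructor
    · exact fun h => h.2
    · intro h
      have := hJsub h
      simp only [Set.mem_Icc] at this
      exact ⟨this, h⟩
  have hgcost : matchingCost m c g
      = (∑ j ∈ Finset.Icc 1 m \ D, dist (c j) (g0 j)) + ∑ j ∈ D, dist (c j) (f j) := by
    rw [matchingCost, ← Finset.sum_sdiff hDm]
    congr 1
    · apply Finset.sum_congr rfl
      intro j hj
      have : j ∉ J := fun h => (Finset.mem_sdiff.mp hj).2 ((hmemD j).mpr h)
      simp [hg, this]
    · apply Finset.sum_congr rfl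
      intro j hj
      simp [hg, (hmemD j).mp hj]
  have hg0cost : matchingCost m c g0
      = (∑ j ∈ Finset.Icc 1 m \ D, dist (c j) (g0 j)) + ∑ j ∈ D, dist (c j) (g0 j) := by
    rw [matchingCost, ← Finset.sum_sdiff hDm]
  have hf'cost : matchingCost t c f'
      = (∑ j ∈ Finset.Icc 1 t \ D, dist (c j) (f j)) + ∑ j ∈ D, dist (c j) (g0 j) := by
    rw [matchingCost, ← Finset.sum_sdiff hDt]
    congr 1
    · apply Finset.sum_congr rfl
      intro j hj
      have : j ∉ J := fun h => (Finset.mem_sdiff.mp hj).2 ((hmemD j).mpr h)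
      simp [hf', this]
    · apply Finset.sum_congr rfl
      intro j hj
      simp [hf', (hmemD j).mp hj]
  have hfcost : matchingCost t c f
      = (∑ j ∈ Finset.Icc 1 t \ D, dist (c j) (f j)) + ∑ j ∈ D, dist (c j) (f j) := by
    rw [matchingCost, ← Finset.sum_sdiff hDt]
  have hflo : matchingCost t c f ≤ matchingCost t c f' :=
    hfopt ▸ opt_le S c hf'match
  have hkey : matchingCost m c g ≤ matchingCost m c g0 := by
    rw [hgcost, hg0cost]
    have : (∑ j ∈ D, dist (c j) (f j)) ≤ ∑ j ∈ D, dist (c j) (g0 j) := by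
      have := hflo
      rw [hfcost, hf'cost] at this
      linarith
    linarith
  have hgopt : matchingCost m c g = OPT S m c :=
    le_antisymm (hg0opt ▸ hkey) (opt_le S c hgmatch)
  -- cardinality
  refine ⟨g, hgmatch, hgopt, himg, ?_⟩
  have hfin : (g '' Set.Icc 1 m).Finite := ((Set.finite_Icc 1 m).image g)
  rw [Set.ncard_diff himg ((Set.finite_Icc 1 t).image f)]
  have h1 : (g '' Set.Icc 1 m).ncard = m := by
    rw [Set.ncard_image_of_injOn hginj, ← Finset.coe_Icc, Set.ncard_coe_finset, Nat.card_Icc]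
    omega
  have h2 : (f '' Set.Icc 1 t).ncard = t := by
    rw [Set.ncard_image_of_injOn hf.1, ← Finset.coe_Icc, Set.ncard_coe_finset, Nat.card_Icc]
    omega
  rw [h1, h2]
end

section
/- Let (X,d) be a metric space, let S ⊆ X be a finite server set, and let c_1,…,c_m ∈ X be clients with m ≤ |S|. Let 1 ≤ t < m, let f : {1,…,t} → S be an optimal matching of the first t clients into S with image S₁ = range(f), and let g : {1,…,m} → S be an optimal matching of all m clients into S whose image S₂ = range(g) satisfies S₁ ⊆ S₂ (so |S₂ \ S₁| = m − t). Then there exists an injective map h : {t+1,…,m} → S₂ \ S₁ with Σ_{j=t+1}^{m} d(c_j, h(j)) ≤ cost(f) + cost(g); in particular, the minimum cost of a matching of the clients c_{t+1},…,c_m onto the servers S₂ \ S₁ is at most 2·cost(g). -/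
open Function Set Classical

/-- One backward step along the alternating chain: if `x` is in the image of `e`
restricted to `[1,t]`, pick a preimage; otherwise stay put. -/
noncomputable def prevFn (t : ℕ) (e : ℕ → ℕ) (x : ℕ) : ℕ :=
  if h : ∃ i ∈ Set.Icc 1 t, e i = x then h.choose else x

lemma prevFn_of_mem {t : ℕ} {e : ℕ → ℕ} {x : ℕ} (h : ∃ i ∈ Set.Icc 1 t, e i = x) :
    prevFn t e x ∈ Set.Icc 1 t ∧ e (prevFn t e x) = x := by
  rw [prevFn, dif_pos h]
  exact ⟨h.choose_spec.1, h.choose_spec.2⟩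

lemma prevFn_of_nonfixed {t : ℕ} {e : ℕ → ℕ} {x : ℕ} (h : prevFn t e x ≠ x) :
    prevFn t e x ∈ Set.Icc 1 t ∧ e (prevFn t e x) = x := by
  by_cases hx : ∃ i ∈ Set.Icc 1 t, e i = x
  · exact prevFn_of_mem hx
  · exact absurd (by rw [prevFn, dif_neg hx]) h

lemma prevFn_back_inj {t : ℕ} {e : ℕ → ℕ} {a b : ℕ}
    (ha : prevFn t e a ≠ a) (hb : prevFn t e b ≠ b)
    (h : prevFn t e a = prevFn t e b) : a = b := by
  have h1 := (prevFn_of_nonfixed ha).2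
  have h2 := (prevFn_of_nonfixed hb).2
  rw [← h1, h, h2]

lemma chain_back {t : ℕ} {e : ℕ → ℕ} {j j' : ℕ}
    (hj : j ∉ Set.Icc 1 t) (hj' : j' ∉ Set.Icc 1 t) :
    ∀ a b : ℕ,
      (∀ i < a, prevFn t e ((prevFn t e)^[i] j) ≠ (prevFn t e)^[i] j) →
      (∀ i < b, prevFn t e ((prevFn t e)^[i] j') ≠ (prevFn t e)^[i] j') →
      (prevFn t e)^[a] j = (prevFn t e)^[b] j' → a = b ∧ j = j' := by
  intro a
  induction a with
  | zero =>
    intro b _ hb heq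
    cases b with
    | zero =>
      simp only [Function.iterate_zero_apply] at heq
      exact ⟨rfl, heq⟩
    | succ b' =>
      exfalso
      rw [Function.iterate_succ_apply'] at heq
      simp only [Function.iterate_zero_apply] at heq
      have hnb := hb b' (Nat.lt_succ_self b')
      have hmem := (prevFn_of_nonfixed hnb).1
      rw [← heq] at hmem
      exact hj hmem
  | succ a' ih =>
    intro b ha hb heq
    cases b with
    | zero =>
      exfalso
      rw [Function.iterate_succ_apply'] at heq
      simp only [Function.iterate_zero_apply] at heq
      have hna := ha a' (Nat.lt_succ_self a')
      have hmem := (prevFn_of_nonfixed hna).1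
      rw [heq] at hmem
      exact hj' hmem
    | succ b' =>
      rw [Function.iterate_succ_apply', Function.iterate_succ_apply'] at heq
      have hna := ha a' (Nat.lt_succ_self a')
      have hnb := hb b' (Nat.lt_succ_self b')
      have hx := prevFn_back_inj hna hnb heq
      obtain ⟨h1, h2⟩ := ih b' (fun i hi => ha i (hi.trans (Nat.lt_succ_self a')))
        (fun i hi => hb i (hi.trans (Nat.lt_succ_self b'))) hx
      exact ⟨by rw [h1], h2⟩

lemma prevFn_iterate_mem {t m : ℕ} {e : ℕ → ℕ} (ht : t ≤ m) {j : ℕ}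
    (hj : j ∈ Set.Icc 1 m) : ∀ k, (prevFn t e)^[k] j ∈ Set.Icc 1 m := by
  intro k
  induction k with
  | zero => simpa using hj
  | succ k ihk =>
    rw [Function.iterate_succ_apply']
    by_cases hfix : prevFn t e ((prevFn t e)^[k] j) = (prevFn t e)^[k] j
    · rw [hfix]; exact ihk
    · have := (prevFn_of_nonfixed hfix).1
      exact ⟨this.1, this.2.trans ht⟩

lemma chain_fixed_exists {t m : ℕ} {e : ℕ → ℕ} (ht : t ≤ m) {j : ℕ}
    (hj : j ∈ Set.Icc 1 m) (hjt : j ∉ Set.Icc 1 t) :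
    ∃ k ≤ m, prevFn t e ((prevFn t e)^[k] j) = (prevFn t e)^[k] j := by
  by_contra hcon
  push_neg at hcon
  have hmap : ∀ k ∈ Finset.range (m + 1), (prevFn t e)^[k] j ∈ Finset.Icc 1 m := by
    intro k _
    have := prevFn_iterate_mem (e := e) ht hj k
    simpa [Finset.mem_Icc] using this
  have hcard : (Finset.Icc 1 m).card < (Finset.range (m + 1)).card := by
    simp [Nat.card_Icc]
  obtain ⟨a, haR, b, hbR, hab, heq⟩ :=
    Finset.exists_ne_map_eq_of_card_lt_of_maps_to hcard hmap
  simp only [Finset.mem_range, Nat.lt_succ_iff] at haR hbR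
  have key := chain_back hjt hjt a b
    (fun i hi => hcon i ((le_of_lt hi).trans haR))
    (fun i hi => hcon i ((le_of_lt hi).trans hbR)) heq
  exact hab key.1


/-- Let `f` be an optimal matching of the first `t` clients with image `S₁ = f '' [1,t]`, and
let `g` be an optimal matching of the first `m` clients (with `t < m ≤ |S|`) whose image
`S₂ = g '' [1,m]` contains `S₁`.  Then the clients `c (t+1), …, c m` can be injectively
matched into `S₂ \ S₁` with total cost at most `cost f + cost g`; in particular, the minimum
cost of a matching of the clients `c (t+1), …, c m` onto the servers `S₂ \ S₁` is at most
`2 · cost g`. -/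
theorem stmt6 {X : Type*} [MetricSpace X] (S : Finset X) (c : ℕ → X) (m t : ℕ)
    (hm : m ≤ S.card) (ht1 : 1 ≤ t) (htm : t < m)
    (f : ℕ → X) (hf : IsMatching S t f) (hfopt : matchingCost t c f = OPT S t c)
    (g : ℕ → X) (hg : IsMatching S m g) (hgopt : matchingCost m c g = OPT S m c)
    (hsub : f '' Set.Icc 1 t ⊆ g '' Set.Icc 1 m) :
    (∃ h : ℕ → X, Set.InjOn h (Set.Icc (t + 1) m) ∧
        (∀ j ∈ Set.Icc (t + 1) m, h j ∈ g '' Set.Icc 1 m \ f '' Set.Icc 1 t) ∧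
        ∑ j ∈ Finset.Icc (t + 1) m, dist (c j) (h j) ≤
          matchingCost t c f + matchingCost m c g) ∧
      sInf {r : ℝ | ∃ h : ℕ → X, Set.InjOn h (Set.Icc (t + 1) m) ∧
          (∀ j ∈ Set.Icc (t + 1) m, h j ∈ g '' Set.Icc 1 m \ f '' Set.Icc 1 t) ∧
          r = ∑ j ∈ Finset.Icc (t + 1) m, dist (c j) (h j)} ≤
        2 * matchingCost m c g := by
  classical
  obtain ⟨hfinj, hfS⟩ := hf
  obtain ⟨hginj, hgS⟩ := hg
  have htm' : t ≤ m := le_of_lt htm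
  -- the reindexing map `e` with `g (e i) = f i` for `i ∈ [1,t]`
  have heEx : ∀ i : ℕ, ∃ x : ℕ, i ∈ Set.Icc 1 t → (x ∈ Set.Icc 1 m ∧ g x = f i) := by
    intro i
    by_cases hi : i ∈ Set.Icc 1 t
    · obtain ⟨x, hx, hgx⟩ := hsub ⟨i, hi, rfl⟩
      exact ⟨x, fun _ => ⟨hx, hgx⟩⟩
    · exact ⟨0, fun h => absurd h hi⟩
  choose e he using heEx
  -- basic facts about membership of chain indices
  have hBmem : ∀ j ∈ Set.Icc (t + 1) m, j ∈ Set.Icc 1 m ∧ j ∉ Set.Icc 1 t := by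
    intro j hj
    obtain ⟨hj1, hj2⟩ := hj
    refine ⟨⟨le_trans (Nat.le_add_left 1 t) hj1, hj2⟩, ?_⟩
    intro hjA
    exact absurd (le_trans hj1 hjA.2) (by omega)
  -- chain length
  set K : ℕ → ℕ := fun j =>
    sInf {k | prevFn t e ((prevFn t e)^[k] j) = (prevFn t e)^[k] j} with hKdef
  have hKspec : ∀ j ∈ Set.Icc (t + 1) m,
      K j ≤ m ∧ prevFn t e ((prevFn t e)^[K j] j) = (prevFn t e)^[K j] j ∧
        ∀ i < K j, prevFn t e ((prevFn t e)^[i] j) ≠ (prevFn t e)^[i] j := by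
    intro j hj
    obtain ⟨hjm, hjt⟩ := hBmem j hj
    obtain ⟨k, hkm, hkfix⟩ := chain_fixed_exists (e := e) htm' hjm hjt
    have hne : {k | prevFn t e ((prevFn t e)^[k] j) = (prevFn t e)^[k] j}.Nonempty :=
      ⟨k, hkfix⟩
    refine ⟨le_trans (Nat.sInf_le hkfix) hkm, Nat.sInf_mem hne, ?_⟩
    intro i hi hfix
    have hle : K j ≤ i := Nat.sInf_le hfix
    omega
  have hstab : ∀ j ∈ Set.Icc (t + 1) m, ∀ k, K j ≤ k →
      (prevFn t e)^[k] j = (prevFn t e)^[K j] j := by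
    intro j hj k hk
    induction k, hk using Nat.le_induction with
    | base => rfl
    | succ n hn ihn =>
      rw [Function.iterate_succ_apply', ihn]
      exact (hKspec j hj).2.1
  have hend : ∀ j ∈ Set.Icc (t + 1) m,
      (prevFn t e)^[m] j = (prevFn t e)^[K j] j := by
    intro j hj
    exact hstab j hj m (hKspec j hj).1
  -- the matching h
  set hfun : ℕ → X := fun j => g ((prevFn t e)^[m] j) with hfdef
  -- injectivity
  have hinj : Set.InjOn hfun (Set.Icc (t + 1) m) := by
    intro j hj j' hj' heq
    obtain ⟨hjm, hjt⟩ := hBmem j hj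
    obtain ⟨hjm', hjt'⟩ := hBmem j' hj'
    have h1 : (prevFn t e)^[m] j = (prevFn t e)^[m] j' :=
      hginj (prevFn_iterate_mem htm' hjm m) (prevFn_iterate_mem htm' hjm' m) heq
    rw [hend j hj, hend j' hj'] at h1
    exact (chain_back hjt hjt' (K j) (K j') (hKspec j hj).2.2 (hKspec j' hj').2.2 h1).2
  -- membership in S₂ \ S₁
  have hmemS : ∀ j ∈ Set.Icc (t + 1) m,
      hfun j ∈ g '' Set.Icc 1 m \ f '' Set.Icc 1 t := by
    intro j hj
    obtain ⟨hjm, hjt⟩ := hBmem j hj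
    have hy : (prevFn t e)^[m] j ∈ Set.Icc 1 m := prevFn_iterate_mem htm' hjm m
    refine ⟨⟨(prevFn t e)^[m] j, hy, rfl⟩, ?_⟩
    rintro ⟨i, hi, hgi⟩
    -- then the endpoint is in the image of e, so prevFn moves it or fixes it inside A
    have hgei : g (e i) = f i := (he i hi).2
    have heim : e i ∈ Set.Icc 1 m := (he i hi).1
    have hyei : (prevFn t e)^[m] j = e i := by
      apply hginj hy heim
      rw [hgei]
      exact hgi.symm
    have hex : ∃ i' ∈ Set.Icc 1 t, e i' = (prevFn t e)^[m] j := ⟨i, hi, hyei.symm⟩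
    obtain ⟨hpmem, hpe⟩ := prevFn_of_mem hex
    -- y is a fixed point of prevFn
    have hyfix : prevFn t e ((prevFn t e)^[m] j) = (prevFn t e)^[m] j := by
      rw [hend j hj]; exact (hKspec j hj).2.1
    rw [hyfix] at hpmem hpe
    -- so y ∈ Icc 1 t and e y = y
    rcases Nat.eq_zero_or_pos (K j) with hK0 | hKpos
    · have : (prevFn t e)^[m] j = j := by rw [hend j hj, hK0]; rfl
      rw [this] at hpmem
      exact hjt hpmem
    · obtain ⟨K', hK'⟩ : ∃ K', K j = K' + 1 := ⟨K j - 1, by omega⟩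
      have hnf : prevFn t e ((prevFn t e)^[K'] j) ≠ (prevFn t e)^[K'] j :=
        (hKspec j hj).2.2 K' (by omega)
      have hstep : (prevFn t e)^[K j] j = prevFn t e ((prevFn t e)^[K'] j) := by
        rw [hK', Function.iterate_succ_apply']
      have hey : e ((prevFn t e)^[m] j) = (prevFn t e)^[K'] j := by
        rw [hend j hj, hstep]
        exact (prevFn_of_nonfixed hnf).2
      rw [hpe, hend j hj, hstep] at hey
      exact hnf hey
  -- cost estimates
  set F : ℕ → ℝ := fun i => dist (c i) (f i) + dist (c i) (g i) with hFdef
  have hFnonneg : ∀ i, 0 ≤ F i := fun i => add_nonneg dist_nonneg dist_nonneg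
  have htel : ∀ j : ℕ, ∀ n : ℕ, dist (c j) (g ((prevFn t e)^[n] j)) ≤
      dist (c j) (g j) + ∑ k ∈ Finset.range n,
        dist (g ((prevFn t e)^[k] j)) (g ((prevFn t e)^[k + 1] j)) := by
    intro j n
    induction n with
    | zero => simp
    | succ n ihn =>
      rw [Finset.sum_range_succ, ← add_assoc]
      exact le_trans (dist_triangle (c j) (g ((prevFn t e)^[n] j))
        (g ((prevFn t e)^[n + 1] j))) (add_le_add_left ihn _)
  have hper : ∀ j ∈ Set.Icc (t + 1) m, dist (c j) (hfun j) ≤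
      dist (c j) (g j) + ∑ k ∈ Finset.range (K j), F ((prevFn t e)^[k + 1] j) := by
    intro j hj
    refine le_trans (htel j m) (add_le_add_right ?_ _)
    have hsubK : Finset.range (K j) ⊆ Finset.range m :=
      Finset.range_subset_range.2 (hKspec j hj).1
    have hzero : ∀ k ∈ Finset.range m, k ∉ Finset.range (K j) →
        dist (g ((prevFn t e)^[k] j)) (g ((prevFn t e)^[k + 1] j)) = 0 := by
      intro k _ hk
      rw [Finset.mem_range, not_lt] at hk
      rw [hstab j hj k hk, hstab j hj (k + 1) (le_trans hk (Nat.le_succ k))]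
      simp
    rw [← Finset.sum_subset hsubK hzero]
    refine Finset.sum_le_sum ?_
    intro k hk
    rw [Finset.mem_range] at hk
    have hnf : prevFn t e ((prevFn t e)^[k] j) ≠ (prevFn t e)^[k] j :=
      (hKspec j hj).2.2 k hk
    obtain ⟨hmem, hei⟩ := prevFn_of_nonfixed hnf
    rw [Function.iterate_succ_apply']
    have hgf : g ((prevFn t e)^[k] j) = f (prevFn t e ((prevFn t e)^[k] j)) := by
      rw [← (he _ hmem).2, hei]
    rw [hgf]
    calc dist (f (prevFn t e ((prevFn t e)^[k] j))) (g (prevFn t e ((prevFn t e)^[k] j)))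
        ≤ dist (f (prevFn t e ((prevFn t e)^[k] j))) (c (prevFn t e ((prevFn t e)^[k] j)))
          + dist (c (prevFn t e ((prevFn t e)^[k] j))) (g (prevFn t e ((prevFn t e)^[k] j))) :=
          dist_triangle _ _ _
      _ = F (prevFn t e ((prevFn t e)^[k] j)) := by
          rw [hFdef]; dsimp only; rw [dist_comm (f _) (c _)]
  -- double sum bound
  have hdouble : ∑ j ∈ Finset.Icc (t + 1) m, ∑ k ∈ Finset.range (K j),
      F ((prevFn t e)^[k + 1] j) ≤ ∑ i ∈ Finset.Icc 1 t, F i := by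
    rw [← Finset.sum_sigma ((Finset.Icc (t + 1) m)) (fun j => Finset.range (K j))
      (fun p => F ((prevFn t e)^[p.2 + 1] p.1))]
    set Φ : (Σ _ : ℕ, ℕ) → ℕ := fun p => (prevFn t e)^[p.2 + 1] p.1 with hΦdef
    have hΦinj : ∀ p ∈ (Finset.Icc (t + 1) m).sigma (fun j => Finset.range (K j)),
        ∀ q ∈ (Finset.Icc (t + 1) m).sigma (fun j => Finset.range (K j)),
          Φ p = Φ q → p = q := by
      rintro ⟨j, k⟩ hp ⟨j', k'⟩ hq heq
      rw [Finset.mem_sigma, Finset.mem_Icc, Finset.mem_range] at hp hq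
      dsimp only at hp hq
      have hjB : j ∈ Set.Icc (t + 1) m := Set.mem_Icc.2 hp.1
      have hjB' : j' ∈ Set.Icc (t + 1) m := Set.mem_Icc.2 hq.1
      have hjt := (hBmem j hjB).2
      have hjt' := (hBmem j' hjB').2
      obtain ⟨h1, h2⟩ := chain_back hjt hjt' (k + 1) (k' + 1)
        (fun i hi => (hKspec j hjB).2.2 i (by omega))
        (fun i hi => (hKspec j' hjB').2.2 i (by omega)) heq
      have hkk : k = k' := by omega
      subst h2; subst hkk; rfl
    rw [← Finset.sum_image hΦinj]
    refine Finset.sum_le_sum_of_subset_of_nonneg ?_ (fun i _ _ => hFnonneg i)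
    intro i hi
    rw [Finset.mem_image] at hi
    obtain ⟨⟨j, k⟩, hp, hΦp⟩ := hi
    rw [Finset.mem_sigma, Finset.mem_Icc, Finset.mem_range] at hp
    dsimp only at hp
    have hjB : j ∈ Set.Icc (t + 1) m := Set.mem_Icc.2 hp.1
    have hnf : prevFn t e ((prevFn t e)^[k] j) ≠ (prevFn t e)^[k] j :=
      (hKspec j hjB).2.2 k hp.2
    have hmem2 := (prevFn_of_nonfixed hnf).1
    have hΦval : Φ ⟨j, k⟩ = prevFn t e ((prevFn t e)^[k] j) := by
      simp only [hΦdef]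
      exact Function.iterate_succ_apply' _ _ _
    rw [← hΦp, hΦval, Finset.mem_Icc]
    exact Set.mem_Icc.1 hmem2
  -- total cost bound
  have hcostsplit : matchingCost m c g =
      (∑ j ∈ Finset.Icc 1 t, dist (c j) (g j)) +
        ∑ j ∈ Finset.Icc (t + 1) m, dist (c j) (g j) := by
    rw [matchingCost]
    have e1 : Finset.Icc 1 t = Finset.Ioc 0 t := by rw [← Finset.Icc_add_one_left_eq_Ioc]; rfl
    have e2 : Finset.Icc (t + 1) m = Finset.Ioc t m := by rw [← Finset.Icc_add_one_left_eq_Ioc]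
    have e3 : Finset.Icc 1 m = Finset.Ioc 0 m := by rw [← Finset.Icc_add_one_left_eq_Ioc]; rfl
    rw [e1, e2, e3, Finset.sum_Ioc_consecutive _ (Nat.zero_le t) htm']
  have htotal : ∑ j ∈ Finset.Icc (t + 1) m, dist (c j) (hfun j) ≤
      matchingCost t c f + matchingCost m c g := by
    have h1 : ∑ j ∈ Finset.Icc (t + 1) m, dist (c j) (hfun j) ≤
        ∑ j ∈ Finset.Icc (t + 1) m, (dist (c j) (g j) +
          ∑ k ∈ Finset.range (K j), F ((prevFn t e)^[k + 1] j)) := by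
      refine Finset.sum_le_sum ?_
      intro j hj
      exact hper j (Set.mem_Icc.2 (Finset.mem_Icc.1 hj))
    rw [Finset.sum_add_distrib] at h1
    have h2 : ∑ j ∈ Finset.Icc (t + 1) m, dist (c j) (g j) +
        ∑ j ∈ Finset.Icc (t + 1) m, ∑ k ∈ Finset.range (K j),
          F ((prevFn t e)^[k + 1] j) ≤
        ∑ j ∈ Finset.Icc (t + 1) m, dist (c j) (g j) + ∑ i ∈ Finset.Icc 1 t, F i :=
      add_le_add_right hdouble _
    refine le_trans h1 (le_trans h2 ?_)
    rw [hFdef]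
    rw [Finset.sum_add_distrib, hcostsplit, matchingCost]
    ring_nf
    exact le_refl _
  refine ⟨⟨hfun, hinj, hmemS, htotal⟩, ?_⟩
  -- second part
  have hbdd : BddBelow {r : ℝ | ∃ h : ℕ → X, Set.InjOn h (Set.Icc (t + 1) m) ∧
      (∀ j ∈ Set.Icc (t + 1) m, h j ∈ g '' Set.Icc 1 m \ f '' Set.Icc 1 t) ∧
      r = ∑ j ∈ Finset.Icc (t + 1) m, dist (c j) (h j)} := by
    refine ⟨0, ?_⟩
    rintro r ⟨h', _, _, rfl⟩
    exact Finset.sum_nonneg fun j _ => dist_nonneg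
  have hmem' : (∑ j ∈ Finset.Icc (t + 1) m, dist (c j) (hfun j)) ∈
      {r : ℝ | ∃ h : ℕ → X, Set.InjOn h (Set.Icc (t + 1) m) ∧
        (∀ j ∈ Set.Icc (t + 1) m, h j ∈ g '' Set.Icc 1 m \ f '' Set.Icc 1 t) ∧
        r = ∑ j ∈ Finset.Icc (t + 1) m, dist (c j) (h j)} :=
    ⟨hfun, hinj, hmemS, rfl⟩
  refine le_trans (csInf_le hbdd hmem') (le_trans htotal ?_)
  -- cost f ≤ cost g
  have hA : Set.Icc 1 t ⊆ Set.Icc (1 : ℕ) m := Set.Icc_subset_Icc_right htm'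
  have hgmatch : IsMatching S t g := ⟨hginj.mono hA, fun j hj => hgS j (hA hj)⟩
  have hOPTbdd : BddBelow {r : ℝ | ∃ f' : ℕ → X, IsMatching S t f' ∧
      matchingCost t c f' = r} := by
    refine ⟨0, ?_⟩
    rintro r ⟨f', _, rfl⟩
    exact Finset.sum_nonneg fun j _ => dist_nonneg
  have hfg : matchingCost t c f ≤ matchingCost t c g := by
    rw [hfopt, OPT]
    exact csInf_le hOPTbdd ⟨g, hgmatch, rfl⟩
  have hgg : matchingCost t c g ≤ matchingCost m c g := by
    rw [matchingCost, matchingCost]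
    exact Finset.sum_le_sum_of_subset_of_nonneg
      (Finset.Icc_subset_Icc_right htm') (fun j _ _ => dist_nonneg)
  linarith
end

section
/- Let (X,d) be a metric space, let S ⊆ X be a finite server set, and let c_1,…,c_k ∈ X be clients with k ≤ |S|. Let 0 = L_0 < L_1 < … < L_m = k be batch boundaries, and let ∅ = S_0 ⊆ S_1 ⊆ … ⊆ S_m ⊆ S be server sets such that for each j ∈ {1,…,m}, S_j is the image of some optimal matching of the first L_j clients into S. For each j ∈ {1,…,m}, let N_j : {L_{j−1}+1,…,L_j} → S_j \ S_{j−1} be a bijection of minimum cost Σ_i d(c_i, N_j(i)) among all such bijections. Then the combined map N : {1,…,k} → S, defined by N(i) = N_j(i) for L_{j−1} < i ≤ L_j, is an injective matching of all k clients into S of cost at most (2m − 1)·OPT_k. -/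
lemma matchingCost_nonneg {X : Type*} [MetricSpace X] (t : ℕ) (c f : ℕ → X) :
    0 ≤ matchingCost t c f :=
  Finset.sum_nonneg fun _ _ => dist_nonneg

lemma OPT_nonneg {X : Type*} [MetricSpace X] (S : Finset X) (t : ℕ) (c : ℕ → X) :
    0 ≤ OPT S t c := by
  apply Real.sInf_nonneg
  rintro r ⟨f, _, rfl⟩
  exact matchingCost_nonneg t c f

lemma OPT_le_cost {X : Type*} [MetricSpace X] {S : Finset X} {t : ℕ} (c : ℕ → X) {f : ℕ → X}
    (hf : IsMatching S t f) : OPT S t c ≤ matchingCost t c f :=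
  csInf_le ⟨0, by rintro r ⟨g, _, rfl⟩; exact matchingCost_nonneg t c g⟩ ⟨f, hf, rfl⟩

lemma OPT_zero {X : Type*} [MetricSpace X] (S : Finset X) (c : ℕ → X) : OPT S 0 c = 0 := by
  have hempty : Set.Icc 1 0 = (∅ : Set ℕ) := Set.Icc_eq_empty (by omega)
  have hM : IsMatching S 0 c := ⟨by rw [hempty]; exact Set.injOn_empty c, by rw [hempty]; simp⟩
  have h1 := OPT_le_cost c hM
  have h2 : matchingCost 0 c c = 0 := by simp [matchingCost]
  have h3 := OPT_nonneg S 0 c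
  linarith

lemma OPT_mono {X : Type*} [MetricSpace X] {S : Finset X} {t k : ℕ} (c : ℕ → X) (htk : t ≤ k)
    (F : ℕ → X) (hF : IsMatching S k F) : OPT S t c ≤ OPT S k c := by
  refine le_csInf ⟨matchingCost k c F, F, hF, rfl⟩ ?_
  rintro r ⟨f, hf, rfl⟩
  have hicc : Set.Icc 1 t ⊆ Set.Icc (1:ℕ) k := Set.Icc_subset_Icc_right htk
  have hm : IsMatching S t f := ⟨hf.1.mono hicc, fun j hj => hf.2 j (hicc hj)⟩
  calc OPT S t c ≤ matchingCost t c f := OPT_le_cost c hm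
    _ ≤ matchingCost k c f :=
      Finset.sum_le_sum_of_subset_of_nonneg (Finset.Icc_subset_Icc_right htk)
        (fun _ _ _ => dist_nonneg)


lemma exchange {X : Type*} [MetricSpace X] (c : ℕ → X) :
    ∀ (n : ℕ) (P B : Finset ℕ), P.card = n → P ⊆ B → ∀ f g : ℕ → X,
    Set.InjOn f ↑B → Set.InjOn g ↑P → (g '' ↑P : Set X) ⊆ f '' ↑B →
    ∃ h : ℕ → X, Set.InjOn h ↑(B \ P) ∧ h '' ↑(B \ P) = f '' ↑B \ g '' ↑P ∧
      ∑ i ∈ B \ P, dist (c i) (h i) ≤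
        ∑ i ∈ B, dist (c i) (f i) + ∑ i ∈ P, dist (c i) (g i) := by
  intro n
  induction n with
  | zero =>
    intro P B hcard hPB f g hf hg hsub
    obtain rfl : P = ∅ := Finset.card_eq_zero.mp hcard
    exact ⟨f, by simpa using hf, by simp, by simp⟩
  | succ n ih =>
    intro P B hcard hPB f g hf hg hsub
    obtain ⟨q, hqP⟩ : P.Nonempty := Finset.card_pos.mp (by omega)
    set P' := P.erase q with hP'
    have hPeq : P = insert q P' := (Finset.insert_erase hqP).symm
    have hqP' : q ∉ P' := Finset.notMem_erase q P
    have hcard' : P'.card = n := by rw [hP', Finset.card_erase_of_mem hqP]; omega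
    have hP'P : P' ⊆ P := Finset.erase_subset q P
    have hP'B : P' ⊆ B := hP'P.trans hPB
    have hgP' : Set.InjOn g ↑P' := hg.mono (by exact_mod_cast hP'P)
    have hsub' : (g '' ↑P' : Set X) ⊆ f '' ↑B :=
      (Set.image_mono (f := g) (by exact_mod_cast hP'P)).trans hsub
    obtain ⟨h', hinj', himg', hcost'⟩ := ih P' B hcard' hP'B f g hf hgP' hsub'
    have hqB : q ∈ B := hPB hqP
    have hqBP' : q ∈ B \ P' := Finset.mem_sdiff.mpr ⟨hqB, hqP'⟩
    have hqBP'c : (q : ℕ) ∈ (↑(B \ P') : Set ℕ) := by exact_mod_cast hqBP'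
    have hsmem : g q ∈ f '' ↑B \ g '' ↑P' := by
      refine ⟨hsub ⟨q, by exact_mod_cast hqP, rfl⟩, ?_⟩
      rintro ⟨p', hp', hgp'⟩
      have hp'P : p' ∈ P' := by exact_mod_cast hp'
      have : p' = q := hg (by exact_mod_cast hP'P hp'P) (by exact_mod_cast hqP) hgp'
      exact hqP' (this ▸ hp'P)
    obtain ⟨w, hwB, hws⟩ : ∃ w ∈ (↑(B \ P') : Set ℕ), h' w = g q := by
      rw [← himg'] at hsmem; exact hsmem
    have himgP : g '' (↑P : Set ℕ) = insert (g q) (g '' ↑P') := by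
      rw [hPeq, Finset.coe_insert, Set.image_insert_eq]
    have htarget : f '' ↑B \ g '' (↑P : Set ℕ) = (f '' ↑B \ g '' ↑P') \ {g q} := by
      rw [Set.diff_diff, Set.union_singleton, himgP]
    have hcoeBP : (↑(B \ P) : Set ℕ) = ↑(B \ P') \ {q} := by
      rw [hPeq, Finset.sdiff_insert, Finset.coe_erase]
    have hsubBP : (↑(B \ P) : Set ℕ) ⊆ ↑(B \ P') := by
      rw [hcoeBP]; exact Set.diff_subset
    have hinsBP : insert q (B \ P) = B \ P' := by
      rw [hPeq, Finset.sdiff_insert, Finset.insert_erase hqBP']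
    have hqnBP : q ∉ B \ P := fun hmem => (Finset.mem_sdiff.mp hmem).2 hqP
    have hsumP : ∑ i ∈ P, dist (c i) (g i) =
        dist (c q) (g q) + ∑ i ∈ P', dist (c i) (g i) := by
      rw [hPeq, Finset.sum_insert hqP']
    by_cases hcase : h' q = g q
    · -- restrict h'
      refine ⟨h', hinj'.mono hsubBP, ?_, ?_⟩
      · rw [hcoeBP, hinj'.image_diff, himg', htarget]
        congr 1
        rw [Set.inter_eq_right.mpr (by simpa using hqBP'c), Set.image_singleton, hcase]
      · have h1 : ∑ i ∈ B \ P, dist (c i) (h' i) ≤ ∑ i ∈ B \ P', dist (c i) (h' i) := by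
          apply Finset.sum_le_sum_of_subset_of_nonneg
          · intro x hx; exact_mod_cast hsubBP (by exact_mod_cast hx)
          · intro i _ _; exact dist_nonneg
        have h2 : (0:ℝ) ≤ dist (c q) (g q) := dist_nonneg
        linarith
    · -- swap
      have hwq : w ≠ q := fun h => hcase (h ▸ hws)
      have hwBP' : w ∈ B \ P' := by exact_mod_cast hwB
      have hwBP : w ∈ B \ P := by
        rw [Finset.mem_sdiff] at hwBP' ⊢
        exact ⟨hwBP'.1, by rw [hPeq]; simp [hwq, hwBP'.2]⟩
      refine ⟨Function.update h' w (h' q), ?_, ?_, ?_⟩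
      · intro x hx y hy hxy
        have hx' : x ∈ (↑(B \ P') : Set ℕ) := hsubBP hx
        have hy' : y ∈ (↑(B \ P') : Set ℕ) := hsubBP hy
        have hxq : x ≠ q := by rw [hcoeBP] at hx; exact fun h => hx.2 (by simp [h])
        have hyq : y ≠ q := by rw [hcoeBP] at hy; exact fun h => hy.2 (by simp [h])
        by_cases hxw : x = w <;> by_cases hyw : y = w
        · rw [hxw, hyw]
        · rw [hxw, Function.update_self, Function.update_of_ne hyw] at hxy
          exact absurd (hinj' hqBP'c hy' hxy) (Ne.symm hyq)
        · rw [hyw, Function.update_self, Function.update_of_ne hxw] at hxy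
          exact absurd (hinj' hx' hqBP'c hxy) hxq
        · rw [Function.update_of_ne hxw, Function.update_of_ne hyw] at hxy
          exact hinj' hx' hy' hxy
      · rw [htarget, ← himg']
        ext x
        constructor
        · rintro ⟨a, haBP, rfl⟩
          by_cases haw : a = w
          · subst haw
            rw [Function.update_self]
            exact ⟨⟨q, hqBP'c, rfl⟩, by simpa using hcase⟩
          · rw [Function.update_of_ne haw]
            refine ⟨⟨a, hsubBP haBP, rfl⟩, ?_⟩
            simp only [Set.mem_singleton_iff]
            rw [← hws]
            exact fun h => haw (hinj' (hsubBP haBP) (by exact_mod_cast hwBP') h)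
        · rintro ⟨⟨b, hbBP', rfl⟩, hbne⟩
          simp only [Set.mem_singleton_iff] at hbne
          by_cases hbq : b = q
          · subst hbq
            exact ⟨w, by exact_mod_cast hwBP, Function.update_self _ _ _⟩
          · have hbw : b ≠ w := fun h => hbne (h ▸ hws)
            have hbBP : b ∈ B \ P := by
              have hb' : b ∈ B \ P' := by exact_mod_cast hbBP'
              rw [Finset.mem_sdiff] at hb' ⊢
              exact ⟨hb'.1, by rw [hPeq]; simp [hbq, hb'.2]⟩
            exact ⟨b, by exact_mod_cast hbBP, Function.update_of_ne hbw _ _⟩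
      · have hsum1 : ∑ i ∈ B \ P', dist (c i) (h' i) =
            dist (c q) (h' q) + ∑ i ∈ B \ P, dist (c i) (h' i) := by
          rw [← hinsBP, Finset.sum_insert hqnBP]
        have hsum2 : ∑ i ∈ B \ P, dist (c i) (h' i) =
            dist (c w) (h' w) + ∑ i ∈ (B \ P).erase w, dist (c i) (h' i) := by
          rw [← Finset.insert_erase hwBP, Finset.sum_insert (Finset.notMem_erase w _),
            Finset.erase_insert (Finset.notMem_erase w _)]
        have hsum3 : ∑ i ∈ B \ P, dist (c i) (Function.update h' w (h' q) i) =
            dist (c w) (h' q) + ∑ i ∈ (B \ P).erase w, dist (c i) (h' i) := by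
          rw [← Finset.insert_erase hwBP, Finset.sum_insert (Finset.notMem_erase w _),
            Finset.erase_insert (Finset.notMem_erase w _), Function.update_self]
          congr 1
          refine Finset.sum_congr rfl fun i hi => ?_
          rw [Function.update_of_ne (Finset.ne_of_mem_erase hi)]
        have h4 := dist_triangle4 (c w) (h' w) (c q) (h' q)
        have h5 : dist (h' w) (c q) = dist (c q) (g q) := by rw [hws, dist_comm]
        linarith

/-- Batched Permutation bound: with batch boundaries `0 = L 0 < L 1 < … < L m = k`, nested
server sets `∅ = Sv 0 ⊆ Sv 1 ⊆ … ⊆ Sv m` where each `Sv j` is the image of some optimal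
matching of the first `L j` clients, and with `N j` a minimum-cost bijection from the `j`-th
batch of clients onto `Sv j \ Sv (j-1)`, the combined assignment `Nc` (agreeing with `N j` on
the `j`-th batch) is an injective matching of all `k` clients into `S` of cost at most
`(2m − 1) · OPT_k`. -/
theorem stmt7 {X : Type*} [MetricSpace X] (S : Finset X) (c : ℕ → X) (k m : ℕ)
    (hk : k ≤ S.card)
    (L : ℕ → ℕ) (hL0 : L 0 = 0) (hLm : L m = k)
    (hLmono : ∀ j < m, L j < L (j + 1))
    (Sv : ℕ → Set X) (hSv0 : Sv 0 = ∅)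
    (hSvchain : ∀ j < m, Sv j ⊆ Sv (j + 1))
    (hSvopt : ∀ j, 1 ≤ j → j ≤ m → ∃ f : ℕ → X,
        IsMatching S (L j) f ∧ matchingCost (L j) c f = OPT S (L j) c ∧
        Sv j = f '' Set.Icc 1 (L j))
    (N : ℕ → ℕ → X)
    (hNbij : ∀ j, 1 ≤ j → j ≤ m →
        Set.InjOn (N j) (Set.Icc (L (j - 1) + 1) (L j)) ∧
        N j '' Set.Icc (L (j - 1) + 1) (L j) = Sv j \ Sv (j - 1))
    (hNopt : ∀ j, 1 ≤ j → j ≤ m → ∀ h : ℕ → X,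
        Set.InjOn h (Set.Icc (L (j - 1) + 1) (L j)) →
        h '' Set.Icc (L (j - 1) + 1) (L j) = Sv j \ Sv (j - 1) →
        ∑ i ∈ Finset.Icc (L (j - 1) + 1) (L j), dist (c i) (N j i) ≤
          ∑ i ∈ Finset.Icc (L (j - 1) + 1) (L j), dist (c i) (h i))
    (Nc : ℕ → X)
    (hNc : ∀ j, 1 ≤ j → j ≤ m → ∀ i ∈ Set.Icc (L (j - 1) + 1) (L j), Nc i = N j i) :
    IsMatching S k Nc ∧ matchingCost k c Nc ≤ (2 * (m : ℝ) - 1) * OPT S k c := by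
  rcases Nat.eq_zero_or_pos m with hm0 | hm
  · subst hm0
    have hk0 : k = 0 := by rw [← hLm, hL0]
    subst hk0
    have hempty : Set.Icc 1 0 = (∅ : Set ℕ) := Set.Icc_eq_empty (by omega)
    refine ⟨⟨by rw [hempty]; exact Set.injOn_empty Nc, by rw [hempty]; simp⟩, ?_⟩
    rw [OPT_zero]
    simp [matchingCost]
  -- m ≥ 1
  have hLmon : ∀ b ≤ m, ∀ a ≤ b, L a ≤ L b := by
    intro b
    induction b with
    | zero => intro _ a ha; interval_cases a; exact le_refl _
    | succ b ih =>
      intro hbm a hab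
      rcases Nat.lt_or_ge a (b+1) with h | h
      · exact le_trans (ih (by omega) a (by omega)) (le_of_lt (hLmono b (by omega)))
      · have : a = b + 1 := by omega
        rw [this]
  have hSvmon : ∀ b ≤ m, ∀ a ≤ b, Sv a ⊆ Sv b := by
    intro b
    induction b with
    | zero => intro _ a ha; interval_cases a; exact subset_rfl
    | succ b ih =>
      intro hbm a hab
      rcases Nat.lt_or_ge a (b+1) with h | h
      · exact subset_trans (ih (by omega) a (by omega)) (hSvchain b (by omega))
      · have : a = b + 1 := by omega
        rw [this]
  have hSvS : ∀ j, 1 ≤ j → j ≤ m → Sv j ⊆ ↑S := by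
    intro j hj1 hj2
    obtain ⟨f, hfM, _, hfI⟩ := hSvopt j hj1 hj2
    rw [hfI]
    rintro x ⟨i, hi, rfl⟩
    exact hfM.2 i hi
  have hbatch : ∀ i, 1 ≤ i → i ≤ k → ∃ j, 1 ≤ j ∧ j ≤ m ∧ L (j-1) < i ∧ i ≤ L j := by
    suffices h : ∀ n ≤ m, ∀ i, 1 ≤ i → i ≤ L n → ∃ j, 1 ≤ j ∧ j ≤ n ∧ L (j-1) < i ∧ i ≤ L j by
      intro i h1 h2
      exact h m le_rfl i h1 (by rwa [hLm])
    intro n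
    induction n with
    | zero => intro _ i h1 h2; rw [hL0] at h2; omega
    | succ n ih =>
      intro hnm i h1 h2
      rcases le_or_gt i (L n) with h | h
      · obtain ⟨j, hj1, hj2, hj3, hj4⟩ := ih (by omega) i h1 h
        exact ⟨j, hj1, by omega, hj3, hj4⟩
      · refine ⟨n+1, by omega, le_rfl, ?_, h2⟩
        simpa using h
  have hNmem : ∀ j, 1 ≤ j → j ≤ m → ∀ i, L (j-1) < i → i ≤ L j → N j i ∈ Sv j \ Sv (j-1) := by
    intro j hj1 hj2 i hi1 hi2
    rw [← (hNbij j hj1 hj2).2]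
    exact ⟨i, Set.mem_Icc.mpr ⟨by omega, hi2⟩, rfl⟩
  have hMatch : IsMatching S k Nc := by
    constructor
    · intro i1 h1 i2 h2 heq
      rw [Set.mem_Icc] at h1 h2
      obtain ⟨j1, hj11, hj12, hj13, hj14⟩ := hbatch i1 h1.1 h1.2
      obtain ⟨j2, hj21, hj22, hj23, hj24⟩ := hbatch i2 h2.1 h2.2
      have e1 : Nc i1 = N j1 i1 := hNc j1 hj11 hj12 i1 (Set.mem_Icc.mpr ⟨by omega, hj14⟩)
      have e2 : Nc i2 = N j2 i2 := hNc j2 hj21 hj22 i2 (Set.mem_Icc.mpr ⟨by omega, hj24⟩)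
      have m1 := hNmem j1 hj11 hj12 i1 hj13 hj14
      have m2 := hNmem j2 hj21 hj22 i2 hj23 hj24
      rw [e1, e2] at heq
      rcases lt_trichotomy j1 j2 with hlt | heqj | hgt
      · exfalso
        apply m2.2
        rw [← heq]
        exact hSvmon (j2-1) (by omega) j1 (by omega) m1.1
      · subst heqj
        exact (hNbij j1 hj11 hj12).1 (Set.mem_Icc.mpr ⟨by omega, hj14⟩)
          (Set.mem_Icc.mpr ⟨by omega, hj24⟩) heq
      · exfalso
        apply m1.2
        rw [heq]
        exact hSvmon (j1-1) (by omega) j2 (by omega) m2.1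
    · intro i hi
      rw [Set.mem_Icc] at hi
      obtain ⟨j, hj1, hj2, hj3, hj4⟩ := hbatch i hi.1 hi.2
      have e : Nc i = N j i := hNc j hj1 hj2 i (Set.mem_Icc.mpr ⟨by omega, hj4⟩)
      rw [e]
      exact hSvS j hj1 hj2 (hNmem j hj1 hj2 i hj3 hj4).1
  refine ⟨hMatch, ?_⟩
  -- per-batch bound
  have hbatchcost : ∀ j, 1 ≤ j → j ≤ m →
      ∑ i ∈ Finset.Ioc (L (j-1)) (L j), dist (c i) (N j i) ≤
        OPT S (L j) c + OPT S (L (j-1)) c := by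
    intro j hj1 hj2
    obtain ⟨f, hfM, hfC, hfI⟩ := hSvopt j hj1 hj2
    have hgex : ∃ g : ℕ → X, Set.InjOn g ↑(Finset.Icc 1 (L (j-1))) ∧
        g '' ↑(Finset.Icc 1 (L (j-1))) = Sv (j-1) ∧
        ∑ i ∈ Finset.Icc 1 (L (j-1)), dist (c i) (g i) = OPT S (L (j-1)) c := by
      rcases Nat.eq_or_lt_of_le hj1 with hj1' | hj1'
      · -- j = 1
        have hL0' : L (j-1) = 0 := by rw [← hj1']; simpa using hL0
        refine ⟨f, ?_, ?_, ?_⟩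
        · rw [hL0']; simp
        · have hj0 : j - 1 = 0 := by omega
          rw [hL0', hj0, hSv0]
          simp
        · rw [hL0']
          simp [OPT_zero]
      · obtain ⟨g, hgM, hgC, hgI⟩ := hSvopt (j-1) (by omega) (by omega)
        exact ⟨g, by rw [Finset.coe_Icc]; exact hgM.1, by rw [Finset.coe_Icc, ← hgI],
          hgC⟩
    obtain ⟨g, hgInj, hgImg, hgCost⟩ := hgex
    have hPB : Finset.Icc 1 (L (j-1)) ⊆ Finset.Icc 1 (L j) :=
      Finset.Icc_subset_Icc_right (hLmon j hj2 (j-1) (by omega))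
    have hfInj : Set.InjOn f ↑(Finset.Icc 1 (L j)) := by rw [Finset.coe_Icc]; exact hfM.1
    have hfImg : f '' ↑(Finset.Icc 1 (L j)) = Sv j := by rw [Finset.coe_Icc, ← hfI]
    have hsub : (g '' ↑(Finset.Icc 1 (L (j-1))) : Set X) ⊆ f '' ↑(Finset.Icc 1 (L j)) := by
      rw [hgImg, hfImg]
      exact hSvmon j hj2 (j-1) (by omega)
    obtain ⟨h, hhInj, hhImg, hhCost⟩ := exchange c (Finset.Icc 1 (L (j-1))).card
      (Finset.Icc 1 (L (j-1))) (Finset.Icc 1 (L j)) rfl hPB f g hfInj hgInj hsub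
    have hBP : Finset.Icc 1 (L j) \ Finset.Icc 1 (L (j-1)) = Finset.Ioc (L (j-1)) (L j) := by
      ext x
      simp only [Finset.mem_sdiff, Finset.mem_Icc, Finset.mem_Ioc]
      omega
    have hsetIcc : Set.Icc (L (j-1) + 1) (L j) = Set.Ioc (L (j-1)) (L j) := by
      ext x; simp only [Set.mem_Icc, Set.mem_Ioc]; omega
    rw [hBP] at hhInj hhImg hhCost
    rw [Finset.coe_Ioc] at hhInj hhImg
    have hhInj' : Set.InjOn h (Set.Icc (L (j-1) + 1) (L j)) := by rw [hsetIcc]; exact hhInj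
    have hhImg' : h '' Set.Icc (L (j-1) + 1) (L j) = Sv j \ Sv (j-1) := by
      rw [hsetIcc, hhImg, hfImg, hgImg]
    have hN := hNopt j hj1 hj2 h hhInj' hhImg'
    rw [Finset.Icc_add_one_left_eq_Ioc] at hN
    calc ∑ i ∈ Finset.Ioc (L (j-1)) (L j), dist (c i) (N j i)
        ≤ ∑ i ∈ Finset.Ioc (L (j-1)) (L j), dist (c i) (h i) := hN
      _ ≤ ∑ i ∈ Finset.Icc 1 (L j), dist (c i) (f i)
            + ∑ i ∈ Finset.Icc 1 (L (j-1)), dist (c i) (g i) := hhCost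
      _ = OPT S (L j) c + OPT S (L (j-1)) c := by
          simp only [matchingCost] at hfC
          rw [hfC, hgCost]
  -- total
  have htot : ∀ n ≤ m, ∑ i ∈ Finset.Ioc 0 (L n), dist (c i) (Nc i) ≤
      ∑ j ∈ Finset.Icc 1 n, (OPT S (L j) c + OPT S (L (j-1)) c) := by
    intro n
    induction n with
    | zero => intro _; simp [hL0]
    | succ n ih =>
      intro hnm
      rw [← Finset.sum_Ioc_consecutive _ (Nat.zero_le (L n))
        (le_of_lt (hLmono n (by omega))), Finset.sum_Icc_succ_top (by omega : 1 ≤ n + 1)]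
      have hNceq : ∑ i ∈ Finset.Ioc (L n) (L (n+1)), dist (c i) (Nc i) =
          ∑ i ∈ Finset.Ioc (L n) (L (n+1)), dist (c i) (N (n+1) i) := by
        refine Finset.sum_congr rfl fun i hi => ?_
        rw [Finset.mem_Ioc] at hi
        have him : i ∈ Set.Icc (L ((n+1) - 1) + 1) (L (n+1)) := by
          simp only [Nat.add_sub_cancel]
          exact Set.mem_Icc.mpr ⟨by omega, hi.2⟩
        rw [hNc (n+1) (by omega) hnm i him]
      rw [hNceq]
      have hb := hbatchcost (n+1) (by omega) hnm
      simp only [Nat.add_sub_cancel] at hb ⊢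
      exact add_le_add (ih (by omega)) hb
  have hcost : matchingCost k c Nc ≤
      ∑ j ∈ Finset.Icc 1 m, (OPT S (L j) c + OPT S (L (j-1)) c) := by
    have := htot m le_rfl
    rw [hLm] at this
    rwa [matchingCost, show Finset.Icc 1 k = Finset.Ioc 0 k from Finset.Icc_add_one_left_eq_Ioc 0 k]
  -- bound each term
  obtain ⟨F, hFM, _, _⟩ := hSvopt m hm le_rfl
  rw [hLm] at hFM
  have hopt_le : ∀ j ≤ m, OPT S (L j) c ≤ OPT S k c := fun j hj =>
    OPT_mono c (by rw [← hLm]; exact hLmon m le_rfl j hj) F hFM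
  have hzero : OPT S (L 0) c = 0 := by rw [hL0]; exact OPT_zero S c
  have hsplit : Finset.Icc 1 m = insert 1 (Finset.Icc 2 m) := by
    ext x; simp only [Finset.mem_Icc, Finset.mem_insert]; omega
  have h1nmem : (1:ℕ) ∉ Finset.Icc 2 m := by simp
  rw [hsplit, Finset.sum_insert h1nmem] at hcost
  have hterm1 : OPT S (L 1) c + OPT S (L (1-1)) c ≤ OPT S k c := by
    simp only [Nat.sub_self]
    rw [hzero]
    simpa using hopt_le 1 hm
  have hterms : ∑ j ∈ Finset.Icc 2 m, (OPT S (L j) c + OPT S (L (j-1)) c) ≤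
      (m - 1 : ℕ) * (2 * OPT S k c) := by
    calc ∑ j ∈ Finset.Icc 2 m, (OPT S (L j) c + OPT S (L (j-1)) c)
        ≤ ∑ _j ∈ Finset.Icc 2 m, (2 * OPT S k c) := by
          refine Finset.sum_le_sum fun j hj => ?_
          rw [Finset.mem_Icc] at hj
          have h1 := hopt_le j hj.2
          have h2 := hopt_le (j-1) (by omega)
          linarith
      _ = (m - 1 : ℕ) * (2 * OPT S k c) := by
          have hmm : m + 1 - 2 = m - 1 := by omega
          rw [Finset.sum_const, Nat.card_Icc, hmm, nsmul_eq_mul]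
  have hcast : ((m - 1 : ℕ) : ℝ) = (m : ℝ) - 1 := by
    rw [Nat.cast_sub hm]; norm_num
  rw [hcast] at hterms
  calc matchingCost k c Nc
      ≤ OPT S (L 1) c + OPT S (L (1-1)) c
        + ∑ j ∈ Finset.Icc 2 m, (OPT S (L j) c + OPT S (L (j-1)) c) := hcost
    _ ≤ OPT S k c + ((m:ℝ) - 1) * (2 * OPT S k c) := add_le_add hterm1 hterms
    _ = (2 * (m : ℝ) - 1) * OPT S k c := by ring
end

section
/- Let C, S ⊂ ℝ be finite sets with |C| = |S| such that all points of C ∪ S are pairwise distinct (in particular C ∩ S = ∅), and let M : C → S be a bijection. Then M has minimum cost Σ_{c∈C} |c − M(c)| among all bijections from C to S if and only if for every c₁, c₂ ∈ C with c₁ < M(c₁) (a forward arc) and M(c₂) < c₂ (a backward arc), the closed intervals [c₁, M(c₁)] and [M(c₂), c₂] are disjoint. -/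
open MeasureTheory

noncomputable def arcInd (a b : ℝ) : ℝ → ℝ :=
  (Set.Ico (min a b) (max a b)).indicator (fun _ => 1)

lemma arcInd_integrable (a b : ℝ) : Integrable (arcInd a b) := by
  rw [arcInd, integrable_indicator_iff measurableSet_Ico]
  exact integrableOn_const measure_Ico_lt_top.ne

lemma arcInd_nonneg (a b t : ℝ) : 0 ≤ arcInd a b t :=
  Set.indicator_nonneg (fun _ _ => zero_le_one) t

lemma arcInd_integral (a b : ℝ) : ∫ t, arcInd a b t = |a - b| := by
  rw [arcInd, integral_indicator_const (1:ℝ) measurableSet_Ico, Real.volume_real_Ico_of_le min_le_max,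
    smul_eq_mul, mul_one,
    max_sub_min_eq_abs, abs_sub_comm]

lemma term_eq (a b t : ℝ) :
    ((if a ≤ t then (1:ℝ) else 0) - (if b ≤ t then 1 else 0)) =
      (if a ≤ b then 1 else -1) * arcInd a b t := by
  simp only [arcInd, Set.indicator_apply, Set.mem_Ico]
  rcases le_total a b with h | h
  · rw [min_eq_left h, max_eq_right h]
    split_ifs <;> simp_all <;> linarith
  · rw [min_eq_right h, max_eq_left h]
    split_ifs <;> simp_all <;> linarith

lemma arcInd_mem {a b t : ℝ} (h : arcInd a b t ≠ 0) : min a b ≤ t ∧ t < max a b := by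
  by_contra hc
  exact h (Set.indicator_of_notMem (by simpa [Set.mem_Ico] using hc) _)

lemma sum_if_bij {C S : Finset ℝ} {M : ℝ → ℝ} (hM : Set.BijOn M ↑C ↑S) (t : ℝ) :
    ∑ c ∈ C, (if M c ≤ t then (1:ℝ) else 0) = ∑ x ∈ S, (if x ≤ t then 1 else 0) := by
  apply Finset.sum_bij (fun c (_ : c ∈ C) => M c)
  · intro a ha; exact Finset.mem_coe.1 (hM.mapsTo (Finset.mem_coe.2 ha))
  · intro a ha b hb h; exact hM.injOn (Finset.mem_coe.2 ha) (Finset.mem_coe.2 hb) h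
  · intro y hy
    obtain ⟨x, hx, rfl⟩ := hM.surjOn (Finset.mem_coe.2 hy)
    exact ⟨x, Finset.mem_coe.1 hx, rfl⟩
  · intros; rfl

/-- On the line, a bijective matching `M` between clients `C` and servers `S` (with all
points of `C ∪ S` pairwise distinct) has minimum cost `∑_{c ∈ C} |c − M c|` among all
bijections from `C` to `S` if and only if for every forward arc `(c₁, M c₁)` (i.e.
`c₁ < M c₁`) and every backward arc `(c₂, M c₂)` (i.e. `M c₂ < c₂`), the closed intervals
`[c₁, M c₁]` and `[M c₂, c₂]` are disjoint. -/
theorem stmt8 (C S : Finset ℝ) (hcard : C.card = S.card) (hdisj : Disjoint C S)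
    (M : ℝ → ℝ) (hM : Set.BijOn M ↑C ↑S) :
    (∀ M' : ℝ → ℝ, Set.BijOn M' ↑C ↑S →
        ∑ c ∈ C, |c - M c| ≤ ∑ c ∈ C, |c - M' c|) ↔
      (∀ c₁ ∈ C, ∀ c₂ ∈ C, c₁ < M c₁ → M c₂ < c₂ →
        Disjoint (Set.Icc c₁ (M c₁)) (Set.Icc (M c₂) c₂)) := by
  constructor
  · -- optimal → no crossing
    intro hopt c₁ hc₁ c₂ hc₂ hf hb
    by_contra hnd
    rw [Set.not_disjoint_iff] at hnd
    obtain ⟨t, ht1, ht2⟩ := hnd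
    rw [Set.mem_Icc] at ht1 ht2
    have hMc₁ : M c₁ ∈ S := Finset.mem_coe.1 (hM.mapsTo (Finset.mem_coe.2 hc₁))
    have hMc₂ : M c₂ ∈ S := Finset.mem_coe.1 (hM.mapsTo (Finset.mem_coe.2 hc₂))
    have hne : c₁ ≠ c₂ := by rintro rfl; linarith
    have hMne : M c₂ ≠ M c₁ := fun h =>
      hne (hM.injOn (Finset.mem_coe.2 hc₂) (Finset.mem_coe.2 hc₁) h).symm
    have h12 : c₁ < c₂ := lt_of_le_of_ne (le_trans ht1.1 ht2.2) hne
    have hM21 : M c₂ < M c₁ := lt_of_le_of_ne (le_trans ht2.1 ht1.2) hMne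
    -- swapped matching
    set M' : ℝ → ℝ := fun x => M (Equiv.swap c₁ c₂ x) with hM'def
    have hswap : Set.BijOn (Equiv.swap c₁ c₂) ↑C ↑C := by
      have maps : Set.MapsTo (Equiv.swap c₁ c₂) ↑C ↑C := by
        intro x hx
        rcases eq_or_ne x c₁ with rfl | h1
        · simpa [Equiv.swap_apply_left] using Finset.mem_coe.2 hc₂
        rcases eq_or_ne x c₂ with rfl | h2
        · simpa [Equiv.swap_apply_right] using Finset.mem_coe.2 hc₁
        · rwa [Equiv.swap_apply_of_ne_of_ne h1 h2]
      exact ⟨maps, (Equiv.injective _).injOn, fun y hy =>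
        ⟨Equiv.swap c₁ c₂ y, maps hy, Equiv.swap_apply_self _ _ _⟩⟩
    have hM' : Set.BijOn M' ↑C ↑S := hM.comp hswap
    have hkey : ∀ f : ℝ → ℝ,
        ∑ c ∈ C, f c = f c₁ + f c₂ + ∑ c ∈ (C.erase c₁).erase c₂, f c := by
      intro f
      rw [← Finset.add_sum_erase _ f hc₁,
        ← Finset.add_sum_erase _ f (Finset.mem_erase.2 ⟨hne.symm, hc₂⟩)]
      ring
    have hM'c₁ : M' c₁ = M c₂ := by simp [hM'def, Equiv.swap_apply_left]
    have hM'c₂ : M' c₂ = M c₁ := by simp [hM'def, Equiv.swap_apply_right]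
    have hrest : ∀ c ∈ (C.erase c₁).erase c₂, M' c = M c := by
      intro c hc
      obtain ⟨h2, h1, _⟩ := by
        simpa [Finset.mem_erase] using hc
      simp [hM'def, Equiv.swap_apply_of_ne_of_ne h1 h2]
    have hlt : ∑ c ∈ C, |c - M' c| < ∑ c ∈ C, |c - M c| := by
      rw [hkey (fun c => |c - M' c|), hkey (fun c => |c - M c|)]
      have hsum_eq : ∑ c ∈ (C.erase c₁).erase c₂, |c - M' c|
          = ∑ c ∈ (C.erase c₁).erase c₂, |c - M c| :=
        Finset.sum_congr rfl fun c hc => by rw [hrest c hc]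
      rw [hsum_eq, hM'c₁, hM'c₂]
      have h1 := ht1.1; have h2 := ht1.2; have h3 := ht2.1; have h4 := ht2.2
      rcases abs_cases (c₁ - M c₂) with ⟨e1, _⟩ | ⟨e1, _⟩ <;>
        rcases abs_cases (c₂ - M c₁) with ⟨e2, _⟩ | ⟨e2, _⟩ <;>
        rw [abs_of_nonpos (by linarith : c₁ - M c₁ ≤ 0),
          abs_of_nonneg (by linarith : (0:ℝ) ≤ c₂ - M c₂), e1, e2] <;>
        linarith
    exact absurd (hopt M' hM') (not_le.2 hlt)
  · -- no crossing → optimal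
    intro hcond M' hM'
    set sF : ℝ → ℝ := fun t =>
      (∑ c ∈ C, if c ≤ t then (1:ℝ) else 0) - ∑ x ∈ S, (if x ≤ t then 1 else 0) with hsF
    have sF_eq : ∀ (N : ℝ → ℝ), Set.BijOn N ↑C ↑S → ∀ t,
        sF t = ∑ c ∈ C, (if c ≤ N c then 1 else -1) * arcInd c (N c) t := by
      intro N hN t
      rw [hsF]
      dsimp only
      rw [← sum_if_bij hN t, ← Finset.sum_sub_distrib]
      exact Finset.sum_congr rfl fun c _ => term_eq _ _ _
    have habs : ∀ (N : ℝ → ℝ), Set.BijOn N ↑C ↑S → ∀ t,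
        |sF t| ≤ ∑ c ∈ C, arcInd c (N c) t := by
      intro N hN t
      rw [sF_eq N hN t]
      refine (Finset.abs_sum_le_sum_abs _ _).trans
        (le_of_eq (Finset.sum_congr rfl fun c _ => ?_))
      rw [abs_mul, abs_of_nonneg (arcInd_nonneg _ _ _)]
      split_ifs <;> norm_num
    have hInt : ∀ (N : ℝ → ℝ), Integrable (fun t => ∑ c ∈ C, arcInd c (N c) t) :=
      fun N => integrable_finset_sum _ (fun c _ => arcInd_integrable _ _)
    have hIntS : Integrable sF := by
      have heq : sF = fun t => ∑ c ∈ C, (if c ≤ M c then 1 else -1) * arcInd c (M c) t :=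
        funext (sF_eq M hM)
      rw [heq]
      exact integrable_finset_sum _ (fun c _ => (arcInd_integrable c (M c)).const_mul _)
    have hcost : ∀ (N : ℝ → ℝ), ∫ t, ∑ c ∈ C, arcInd c (N c) t = ∑ c ∈ C, |c - N c| := by
      intro N
      rw [integral_finset_sum _ (fun c _ => arcInd_integrable _ _)]
      exact Finset.sum_congr rfl fun c _ => arcInd_integral _ _
    have hEq : ∀ t, ∑ c ∈ C, arcInd c (M c) t = |sF t| := by
      intro t
      by_cases hP : ∃ c ∈ C, M c < c ∧ arcInd c (M c) t ≠ 0
      · obtain ⟨c₂, hc₂, hb, hne0⟩ := hP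
        have hmem₂ := arcInd_mem hne0
        rw [min_eq_right hb.le, max_eq_left hb.le] at hmem₂
        have hall : ∀ c ∈ C, c ≤ M c → arcInd c (M c) t = 0 := by
          intro c hc hle
          by_contra h0
          have hmem := arcInd_mem h0
          have hMcS : M c ∈ S := Finset.mem_coe.1 (hM.mapsTo (Finset.mem_coe.2 hc))
          have hnec : c ≠ M c := fun h => Finset.disjoint_left.1 hdisj hc (h ▸ hMcS)
          have hlt : c < M c := lt_of_le_of_ne hle hnec
          rw [min_eq_left hlt.le, max_eq_right hlt.le] at hmem
          exact Set.disjoint_left.1 (hcond c hc c₂ hc₂ hlt hb)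
            (Set.mem_Icc.2 ⟨hmem.1, hmem.2.le⟩) (Set.mem_Icc.2 ⟨hmem₂.1, hmem₂.2.le⟩)
        have hneg : sF t = -∑ c ∈ C, arcInd c (M c) t := by
          rw [sF_eq M hM t, ← Finset.sum_neg_distrib]
          refine Finset.sum_congr rfl fun c hc => ?_
          by_cases hle : c ≤ M c
          · rw [if_pos hle, hall c hc hle]; ring
          · rw [if_neg hle]; ring
        rw [hneg, abs_neg, abs_of_nonneg (Finset.sum_nonneg fun c _ => arcInd_nonneg _ _ _)]
      · push_neg at hP
        have hpos : sF t = ∑ c ∈ C, arcInd c (M c) t := by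
          rw [sF_eq M hM t]
          refine Finset.sum_congr rfl fun c hc => ?_
          by_cases hle : c ≤ M c
          · rw [if_pos hle]; ring
          · rw [if_neg hle, hP c hc (lt_of_not_ge hle)]; ring
        rw [hpos, abs_of_nonneg (Finset.sum_nonneg fun c _ => arcInd_nonneg _ _ _)]
    calc ∑ c ∈ C, |c - M c| = ∫ t, ∑ c ∈ C, arcInd c (M c) t := (hcost M).symm
      _ = ∫ t, |sF t| := by
          exact integral_congr_ae (Filter.Eventually.of_forall hEq)
      _ ≤ ∫ t, ∑ c ∈ C, arcInd c (M' c) t :=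
          integral_mono hIntS.abs (hInt M') (fun t => habs M' hM' t)
      _ = ∑ c ∈ C, |c - M' c| := hcost M'
end

section
/- Let S ⊂ ℝ be a finite server set and C ⊂ ℝ a finite client set with |C| < |S|, such that all points of C ∪ S are pairwise distinct. Let M₁ be a minimum-cost injective matching of C into S, with image S₁, and let c ∈ ℝ be a new client with all points of C ∪ S ∪ {c} pairwise distinct. Suppose M₂ is a minimum-cost injective matching of C ∪ {c} into S whose image equals S₁ ∪ {s} for some s ∈ S \ S₁. Then every server of S lying strictly between c and s (i.e. in the open interval (min(c,s), max(c,s))) belongs to S₁ ∪ {s}; equivalently, no unmatched server of S \ (S₁ ∪ {s}) lies strictly between c and s. -/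
/-- If `M` is an optimal injective matching of `C₀` into `S` and `p ∈ S` is free
(not in the image), then `p` is not strictly inside any matching edge. -/
lemma no_cross_aux (C₀ S : Finset ℝ) (M : ℝ → ℝ) (hinj : Set.InjOn M ↑C₀)
    (hmap : Set.MapsTo M ↑C₀ ↑S)
    (hopt : ∀ M' : ℝ → ℝ, Set.InjOn M' ↑C₀ → Set.MapsTo M' ↑C₀ ↑S →
        ∑ x ∈ C₀, |x - M x| ≤ ∑ x ∈ C₀, |x - M' x|)
    (p : ℝ) (hpS : p ∈ S) (hpimg : p ∉ M '' ↑C₀)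
    (x : ℝ) (hx : x ∈ C₀) : ¬ (min x (M x) < p ∧ p < max x (M x)) := by
  rintro ⟨h1, h2⟩
  set M' : ℝ → ℝ := Function.update M x p with hM'
  have hMx : ∀ y, y ≠ x → M' y = M y := fun y hy => Function.update_of_ne hy _ _
  have hMxx : M' x = p := Function.update_self _ _ _
  have hinj' : Set.InjOn M' ↑C₀ := by
    intro a ha b hb hab
    by_cases hax : a = x <;> by_cases hbx : b = x
    · rw [hax, hbx]
    · exfalso; rw [hax, hMxx, hMx b hbx] at hab
      exact hpimg ⟨b, hb, hab.symm⟩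
    · exfalso; rw [hbx, hMxx, hMx a hax] at hab
      exact hpimg ⟨a, ha, hab⟩
    · rw [hMx a hax, hMx b hbx] at hab; exact hinj ha hb hab
  have hmap' : Set.MapsTo M' ↑C₀ ↑S := by
    intro a ha
    by_cases hax : a = x
    · rw [hax, hMxx]; exact hpS
    · rw [hMx a hax]; exact hmap ha
  have hlt : |x - M' x| < |x - M x| := by
    rw [hMxx]
    rcases le_total x (M x) with h | h
    · rw [min_eq_left h] at h1; rw [max_eq_right h] at h2
      rw [abs_of_nonpos (by linarith), abs_of_nonpos (by linarith)]
      linarith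
    · rw [min_eq_right h] at h1; rw [max_eq_left h] at h2
      rw [abs_of_nonneg (by linarith), abs_of_nonneg (by linarith)]
      linarith
  have hsum : ∑ y ∈ C₀, |y - M' y| < ∑ y ∈ C₀, |y - M y| := by
    apply Finset.sum_lt_sum
    · intro i hi
      by_cases hix : i = x
      · rw [hix]; exact hlt.le
      · rw [hMx i hix]
    · exact ⟨x, hx, hlt⟩
  exact absurd (hopt M' hinj' hmap') (not_le.2 hsum)

lemma count_eq_aux (C₀ : Finset ℝ) (M : ℝ → ℝ) (hinj : Set.InjOn M ↑C₀) (p : ℝ)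
    (key : ∀ x ∈ C₀, (x < p ↔ M x < p)) :
    (C₀.filter (· < p)).card = ((C₀.image M).filter (· < p)).card := by
  have himg : (C₀.image M).filter (· < p) = (C₀.filter (· < p)).image M := by
    ext u
    simp only [Finset.mem_filter, Finset.mem_image]
    constructor
    · rintro ⟨⟨x, hx, rfl⟩, hu⟩; exact ⟨x, ⟨hx, (key x hx).2 hu⟩, rfl⟩
    · rintro ⟨x, ⟨hx, hxp⟩, rfl⟩; exact ⟨⟨x, hx, rfl⟩, (key x hx).1 hxp⟩
  rw [himg, Finset.card_image_of_injOn (hinj.mono ?_)]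
  intro a ha
  simp only [Finset.coe_filter, Set.mem_setOf_eq] at ha
  exact ha.1

/-- No free server strictly inside a new arc of Permutation on the line: let `M₁` be a
minimum-cost injective matching of the clients `C` into the servers `S` (`|C| < |S|`, all
points pairwise distinct) with image `S₁ = M₁ '' C`, let `c` be a new client (distinct from
all points of `C ∪ S`), and let `M₂` be a minimum-cost injective matching of `C ∪ {c}` into
`S` whose image is `S₁ ∪ {s}` for some server `s ∈ S \ S₁`.  Then every server of `S` lying
strictly between `c` and `s` belongs to `S₁ ∪ {s}`. -/
theorem stmt9 (S C : Finset ℝ) (hcard : C.card < S.card) (hdisj : Disjoint C S)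
    (M₁ : ℝ → ℝ) (h₁inj : Set.InjOn M₁ ↑C) (h₁map : Set.MapsTo M₁ ↑C ↑S)
    (h₁opt : ∀ M' : ℝ → ℝ, Set.InjOn M' ↑C → Set.MapsTo M' ↑C ↑S →
        ∑ x ∈ C, |x - M₁ x| ≤ ∑ x ∈ C, |x - M' x|)
    (c : ℝ) (hcC : c ∉ C) (hcS : c ∉ S)
    (s : ℝ) (hs : s ∈ S) (hs1 : s ∉ M₁ '' ↑C)
    (M₂ : ℝ → ℝ) (h₂inj : Set.InjOn M₂ ↑(insert c C)) (h₂map : Set.MapsTo M₂ ↑(insert c C) ↑S)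
    (h₂opt : ∀ M' : ℝ → ℝ, Set.InjOn M' ↑(insert c C) → Set.MapsTo M' ↑(insert c C) ↑S →
        ∑ x ∈ insert c C, |x - M₂ x| ≤ ∑ x ∈ insert c C, |x - M' x|)
    (h₂img : M₂ '' ↑(insert c C) = insert s (M₁ '' ↑C)) :
    ∀ s' ∈ S, s' ∈ Set.Ioo (min c s) (max c s) → s' ∈ insert s (M₁ '' ↑C) := by
  intro p hpS hpIoo
  by_contra hnot
  obtain ⟨hp1, hp2⟩ := hpIoo
  have hps : p ≠ s := fun h => hnot (h ▸ Set.mem_insert _ _)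
  have hpM1 : p ∉ M₁ '' ↑C := fun h => hnot (Set.mem_insert_of_mem _ h)
  have hpC : p ∉ C := fun h => (Finset.disjoint_left.1 hdisj) h hpS
  have hpc : p ≠ c := fun h => hcS (h ▸ hpS)
  have hpiC : p ∉ insert c C := by
    simp only [Finset.mem_insert]; push_neg; exact ⟨hpc, hpC⟩
  have hpM2 : p ∉ M₂ '' ↑(insert c C) := by rw [h₂img]; exact hnot
  -- key properties
  have key₂ : ∀ x ∈ insert c C, (x < p ↔ M₂ x < p) := by
    intro x hx
    have hnc := no_cross_aux (insert c C) S M₂ h₂inj h₂map h₂opt p hpS hpM2 x hx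
    have hxp : x ≠ p := fun h => hpiC (h ▸ hx)
    have hMxp : M₂ x ≠ p := fun h => hpM2 ⟨x, hx, h⟩
    constructor
    · intro h; by_contra h2
      exact hnc ⟨lt_of_le_of_lt (min_le_left _ _) h,
        lt_of_lt_of_le (lt_of_le_of_ne (not_lt.1 h2) (Ne.symm hMxp)) (le_max_right _ _)⟩
    · intro h; by_contra h2
      exact hnc ⟨lt_of_le_of_lt (min_le_right _ _) h,
        lt_of_lt_of_le (lt_of_le_of_ne (not_lt.1 h2) (Ne.symm hxp)) (le_max_left _ _)⟩
  have key₁ : ∀ x ∈ C, (x < p ↔ M₁ x < p) := by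
    intro x hx
    have hnc := no_cross_aux C S M₁ h₁inj h₁map h₁opt p hpS hpM1 x hx
    have hxp : x ≠ p := fun h => hpC (h ▸ hx)
    have hMxp : M₁ x ≠ p := fun h => hpM1 ⟨x, hx, h⟩
    constructor
    · intro h; by_contra h2
      exact hnc ⟨lt_of_le_of_lt (min_le_left _ _) h,
        lt_of_lt_of_le (lt_of_le_of_ne (not_lt.1 h2) (Ne.symm hMxp)) (le_max_right _ _)⟩
    · intro h; by_contra h2
      exact hnc ⟨lt_of_le_of_lt (min_le_right _ _) h,
        lt_of_lt_of_le (lt_of_le_of_ne (not_lt.1 h2) (Ne.symm hxp)) (le_max_left _ _)⟩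
  have count₂ := count_eq_aux (insert c C) M₂ h₂inj p key₂
  have count₁ := count_eq_aux C M₁ h₁inj p key₁
  -- finset image equality
  have himg₂ : (insert c C).image M₂ = insert s (C.image M₁) := by
    apply Finset.coe_injective
    rw [Finset.coe_image, h₂img, Finset.coe_insert, Finset.coe_image]
  have hsimg : s ∉ C.image M₁ := by
    intro h
    rw [Finset.mem_image] at h
    obtain ⟨x, hx, hxs⟩ := h
    exact hs1 ⟨x, hx, hxs⟩
  rw [himg₂] at count₂
  rw [Finset.filter_insert, Finset.filter_insert] at count₂
  -- analyze cases on c < p and s < p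
  have hone : (c < p ∧ ¬ s < p) ∨ (s < p ∧ ¬ c < p) := by
    rcases le_total c s with h | h
    · rw [min_eq_left h] at hp1; rw [max_eq_right h] at hp2
      exact Or.inl ⟨hp1, not_lt.2 hp2.le⟩
    · rw [min_eq_right h] at hp1; rw [max_eq_left h] at hp2
      exact Or.inr ⟨hp1, not_lt.2 hp2.le⟩
  have hcfilt : c ∉ C.filter (· < p) := fun h => hcC (Finset.mem_filter.1 h).1
  have hsfilt : s ∉ (C.image M₁).filter (· < p) := fun h => hsimg (Finset.mem_filter.1 h).1
  rcases hone with ⟨h1, h2⟩ | ⟨h1, h2⟩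
  · rw [if_pos h1, if_neg h2, Finset.card_insert_of_notMem hcfilt] at count₂
    omega
  · rw [if_pos h1, if_neg h2, Finset.card_insert_of_notMem hsfilt] at count₂
    omega
end

section
/- Let C, S ⊂ ℝ be finite sets with |C| = |S| = m ≥ 1, and let M : C → S be any bijection. For x ∈ ℝ, let n^f_M(x) = card{c ∈ C : c ≤ x < M(c)} (the number of forward arcs of M crossing x) and n^b_M(x) = card{c ∈ C : M(c) ≤ x < c} (the number of backward arcs of M crossing x). Then Σ_{c∈C} |c − M(c)| = OPT + 2·∫_ℝ min(n^f_M(x), n^b_M(x)) dx, where OPT is the minimum of Σ_{c∈C} |c − M'(c)| over all bijections M' : C → S. -/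
open MeasureTheory

/-- Number of forward arcs of `M` crossing `x`, as a sum of indicators. -/
noncomputable def Fc (C : Finset ℝ) (M : ℝ → ℝ) (x : ℝ) : ℝ :=
  ∑ c ∈ C, (Set.Ico c (M c)).indicator (fun _ => (1 : ℝ)) x

/-- Number of backward arcs of `M` crossing `x`, as a sum of indicators. -/
noncomputable def Bc (C : Finset ℝ) (M : ℝ → ℝ) (x : ℝ) : ℝ :=
  ∑ c ∈ C, (Set.Ico (M c) c).indicator (fun _ => (1 : ℝ)) x

lemma int_ind (a b : ℝ) : Integrable ((Set.Ico a b).indicator fun _ => (1 : ℝ)) := by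
  rw [integrable_indicator_iff measurableSet_Ico]
  refine integrableOn_const ?_
  rw [Real.volume_Ico]
  exact ENNReal.ofReal_ne_top

lemma integral_ind (a b : ℝ) :
    ∫ x, (Set.Ico a b).indicator (fun _ => (1 : ℝ)) x = max (b - a) 0 := by
  rw [integral_indicator_const (1 : ℝ) measurableSet_Ico, measureReal_def, Real.volume_Ico, smul_eq_mul,
    mul_one]
  exact ENNReal.toReal_ofReal'

lemma abs_eq_maxes (a b : ℝ) : |a - b| = max (b - a) 0 + max (a - b) 0 := by
  rcases le_total a b with h | h
  · rw [abs_of_nonpos (by linarith), max_eq_left (by linarith), max_eq_right (by linarith)]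
    ring
  · rw [abs_of_nonneg (by linarith), max_eq_right (by linarith), max_eq_left (by linarith)]
    ring

lemma integrable_Fc (C : Finset ℝ) (M : ℝ → ℝ) : Integrable (Fc C M) := by
  unfold Fc
  exact integrable_finset_sum _ fun c _ => int_ind _ _

lemma integrable_Bc (C : Finset ℝ) (M : ℝ → ℝ) : Integrable (Bc C M) := by
  unfold Bc
  exact integrable_finset_sum _ fun c _ => int_ind _ _

lemma Fc_nonneg (C : Finset ℝ) (M : ℝ → ℝ) (x : ℝ) : 0 ≤ Fc C M x :=
  Finset.sum_nonneg fun c _ => Set.indicator_nonneg (fun _ _ => zero_le_one) x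

lemma Bc_nonneg (C : Finset ℝ) (M : ℝ → ℝ) (x : ℝ) : 0 ≤ Bc C M x :=
  Finset.sum_nonneg fun c _ => Set.indicator_nonneg (fun _ _ => zero_le_one) x

lemma Fc_card (C : Finset ℝ) (M : ℝ → ℝ) (x : ℝ) :
    Fc C M x = ((C.filter fun c => c ≤ x ∧ x < M c).card : ℝ) := by
  unfold Fc
  rw [Finset.card_filter]
  push_cast
  refine Finset.sum_congr rfl fun c _ => ?_
  simp [Set.indicator_apply, Set.mem_Ico]

lemma Bc_card (C : Finset ℝ) (M : ℝ → ℝ) (x : ℝ) :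
    Bc C M x = ((C.filter fun c => M c ≤ x ∧ x < c).card : ℝ) := by
  unfold Bc
  rw [Finset.card_filter]
  push_cast
  refine Finset.sum_congr rfl fun c _ => ?_
  simp [Set.indicator_apply, Set.mem_Ico]

lemma cost_eq (C : Finset ℝ) (M : ℝ → ℝ) :
    ∑ c ∈ C, |c - M c| = ∫ x, (Fc C M x + Bc C M x) := by
  rw [integral_add (integrable_Fc C M) (integrable_Bc C M)]
  unfold Fc Bc
  rw [integral_finset_sum _ fun c _ => int_ind _ _,
    integral_finset_sum _ fun c _ => int_ind _ _, ← Finset.sum_add_distrib]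
  refine Finset.sum_congr rfl fun c _ => ?_
  rw [integral_ind, integral_ind, abs_eq_maxes]

lemma diff_eq (C S : Finset ℝ) (M : ℝ → ℝ) (hM : Set.BijOn M ↑C ↑S) (x : ℝ) :
    Fc C M x - Bc C M x =
      (∑ c ∈ C, if c ≤ x then (1 : ℝ) else 0) - ∑ s ∈ S, if s ≤ x then (1 : ℝ) else 0 := by
  have h1 : Fc C M x - Bc C M x =
      ∑ c ∈ C, ((if c ≤ x then (1 : ℝ) else 0) - if M c ≤ x then (1 : ℝ) else 0) := by
    unfold Fc Bc
    rw [← Finset.sum_sub_distrib]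
    refine Finset.sum_congr rfl fun c _ => ?_
    by_cases h1 : c ≤ x <;> by_cases h2 : M c ≤ x <;>
      simp [Set.indicator_apply, Set.mem_Ico, h1, h2, not_le, not_lt]
  rw [h1, Finset.sum_sub_distrib]
  congr 1
  refine Finset.sum_bij (fun c _ => M c) (fun a ha => hM.mapsTo ha)
    (fun a ha b hb h => hM.injOn ha hb h) (fun b hb => ?_) (fun a _ => rfl)
  obtain ⟨a, ha, rfl⟩ := hM.surjOn hb
  exact ⟨a, ha, rfl⟩

/-- A monotone bijection between two equal-cardinality finsets of reals. -/
lemma exists_mono (C S : Finset ℝ) (hcard : C.card = S.card) :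
    ∃ M₀ : ℝ → ℝ, Set.BijOn M₀ ↑C ↑S ∧
      ∀ ⦃a b : ℝ⦄, a ∈ C → b ∈ C → a < b → M₀ a < M₀ b := by
  classical
  set eC := C.orderIsoOfFin rfl with heC
  set eS := S.orderIsoOfFin hcard.symm with heS
  refine ⟨fun x => if hx : x ∈ C then (eS (eC.symm ⟨x, hx⟩) : ℝ) else x, ⟨?_, ?_, ?_⟩, ?_⟩
  · intro x hx
    have hx' : x ∈ C := hx
    simp only [dif_pos hx']
    exact (eS (eC.symm ⟨x, hx'⟩)).2
  · intro a ha b hb h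
    have ha' : a ∈ C := ha
    have hb' : b ∈ C := hb
    simp only [dif_pos ha', dif_pos hb'] at h
    have := eS.injective (Subtype.coe_injective h)
    have := eC.symm.injective this
    exact Subtype.mk_eq_mk.1 this
  · intro s hs
    have hs' : s ∈ S := hs
    refine ⟨(eC (eS.symm ⟨s, hs'⟩) : ℝ), (eC (eS.symm ⟨s, hs'⟩)).2, ?_⟩
    have hmem : ((eC (eS.symm ⟨s, hs'⟩) : ℝ)) ∈ C := (eC (eS.symm ⟨s, hs'⟩)).2
    simp only [dif_pos hmem, Subtype.coe_eta, OrderIso.symm_apply_apply,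
      OrderIso.apply_symm_apply]
  · intro a b ha hb hab
    simp only [dif_pos ha, dif_pos hb]
    exact Subtype.coe_lt_coe.2 (eS.lt_iff_lt.2 (eC.symm.lt_iff_lt.2 (Subtype.mk_lt_mk.2 hab)))

lemma min_formula (a b : ℝ) : min a b = (a + b - |a - b|) / 2 := by
  rcases le_total a b with h | h
  · rw [min_eq_left h, abs_of_nonpos (by linarith)]; ring
  · rw [min_eq_right h, abs_of_nonneg (by linarith)]; ring

lemma mono_min_zero (C : Finset ℝ) (M₀ : ℝ → ℝ)
    (hmono : ∀ ⦃a b : ℝ⦄, a ∈ C → b ∈ C → a < b → M₀ a < M₀ b) (x : ℝ) :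
    min (Fc C M₀ x) (Bc C M₀ x) = 0 := by
  by_cases hf : ∃ c ∈ C, c ≤ x ∧ x < M₀ c
  · have hb : Bc C M₀ x = 0 := by
      unfold Bc
      refine Finset.sum_eq_zero fun c' hc' => ?_
      rw [Set.indicator_apply_eq_zero]
      intro hx'
      obtain ⟨c, hc, hcx, hxc⟩ := hf
      rw [Set.mem_Ico] at hx'
      have hlt : c < c' := lt_of_le_of_lt hcx hx'.2
      have := hmono hc hc' hlt
      have := hx'.1
      linarith
    rw [hb, min_eq_right (Fc_nonneg C M₀ x)]
  · have hfz : Fc C M₀ x = 0 := by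
      unfold Fc
      refine Finset.sum_eq_zero fun c hc => ?_
      rw [Set.indicator_apply_eq_zero]
      intro hx'
      rw [Set.mem_Ico] at hx'
      exact absurd ⟨c, hc, hx'.1, hx'.2⟩ hf
    rw [hfz, min_eq_left (Bc_nonneg C M₀ x)]

/-- On the line, for finite client and server sets `C, S ⊂ ℝ` with `|C| = |S| = m ≥ 1` and
any bijection `M : C → S`, the cost of `M` equals `OPT` (the minimum cost over all bijections
from `C` to `S`) plus twice the Lebesgue integral of the pointwise minimum of the number of
forward arcs of `M` crossing `x` and the number of backward arcs of `M` crossing `x`. -/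
theorem stmt12 (C S : Finset ℝ) (hcard : C.card = S.card) (hm : 1 ≤ C.card)
    (M : ℝ → ℝ) (hM : Set.BijOn M ↑C ↑S) :
    ∑ c ∈ C, |c - M c| =
      sInf {r : ℝ | ∃ M' : ℝ → ℝ, Set.BijOn M' ↑C ↑S ∧ r = ∑ c ∈ C, |c - M' c|} +
        2 * ∫ x : ℝ,
          min (((C.filter (fun c => c ≤ x ∧ x < M c)).card : ℝ))
            (((C.filter (fun c => M c ≤ x ∧ x < c)).card : ℝ)) := by
  classical
  obtain ⟨M₀, hM₀, hmono⟩ := exists_mono C S hcard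
  have hdiff : ∀ (M' : ℝ → ℝ), Set.BijOn M' ↑C ↑S →
      ∀ x, Fc C M' x - Bc C M' x = Fc C M x - Bc C M x := fun M' hM' x => by
    rw [diff_eq C S M' hM' x, diff_eq C S M hM x]
  have hcost0 : ∑ c ∈ C, |c - M₀ c| = ∫ x, |Fc C M x - Bc C M x| := by
    rw [cost_eq]
    refine integral_congr_ae (Filter.Eventually.of_forall fun x => ?_)
    have h0 := mono_min_zero C M₀ hmono x
    have hFnn := Fc_nonneg C M₀ x
    have hBnn := Bc_nonneg C M₀ x
    have habs : Fc C M₀ x + Bc C M₀ x = |Fc C M₀ x - Bc C M₀ x| := by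
      rcases le_total (Fc C M₀ x) (Bc C M₀ x) with h | h
      · have hz : Fc C M₀ x = 0 := by rw [min_eq_left h] at h0; exact h0
        rw [hz, zero_add, zero_sub, abs_neg, abs_of_nonneg hBnn]
      · have hz : Bc C M₀ x = 0 := by rw [min_eq_right h] at h0; exact h0
        rw [hz, add_zero, sub_zero, abs_of_nonneg hFnn]
    show Fc C M₀ x + Bc C M₀ x = |Fc C M x - Bc C M x|
    rw [habs, hdiff M₀ hM₀ x]
  have hlb : ∀ r ∈ {r : ℝ | ∃ M' : ℝ → ℝ, Set.BijOn M' ↑C ↑S ∧ r = ∑ c ∈ C, |c - M' c|},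
      (∫ x, |Fc C M x - Bc C M x|) ≤ r := by
    rintro r ⟨M', hM', rfl⟩
    rw [cost_eq]
    have hint1 : Integrable (fun x => |Fc C M x - Bc C M x|) :=
      ((integrable_Fc C M).sub (integrable_Bc C M)).abs
    have hint2 : Integrable (fun x => Fc C M' x + Bc C M' x) :=
      (integrable_Fc C M').add (integrable_Bc C M')
    refine integral_mono hint1 hint2 fun x => ?_
    rw [← hdiff M' hM' x]
    have hFnn := Fc_nonneg C M' x
    have hBnn := Bc_nonneg C M' x
    rcases abs_cases (Fc C M' x - Bc C M' x) with ⟨h, _⟩ | ⟨h, _⟩ <;> rw [h] <;> linarith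
  have hmem : (∫ x, |Fc C M x - Bc C M x|) ∈
      {r : ℝ | ∃ M' : ℝ → ℝ, Set.BijOn M' ↑C ↑S ∧ r = ∑ c ∈ C, |c - M' c|} :=
    ⟨M₀, hM₀, hcost0.symm⟩
  have hsinf : sInf {r : ℝ | ∃ M' : ℝ → ℝ, Set.BijOn M' ↑C ↑S ∧ r = ∑ c ∈ C, |c - M' c|} =
      ∫ x, |Fc C M x - Bc C M x| :=
    le_antisymm (csInf_le ⟨_, hlb⟩ hmem) (le_csInf ⟨_, hmem⟩ hlb)
  have hintmin : ∫ x, min (Fc C M x) (Bc C M x) =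
      ((∫ x, (Fc C M x + Bc C M x)) - ∫ x, |Fc C M x - Bc C M x|) / 2 := by
    have heq : (fun x => min (Fc C M x) (Bc C M x)) =
        fun x => (Fc C M x + Bc C M x - |Fc C M x - Bc C M x|) / 2 :=
      funext fun x => min_formula _ _
    have hA : Integrable (fun x => Fc C M x + Bc C M x) :=
      (integrable_Fc C M).add (integrable_Bc C M)
    have hB : Integrable (fun x => |Fc C M x - Bc C M x|) :=
      ((integrable_Fc C M).sub (integrable_Bc C M)).abs
    rw [heq, integral_div, integral_sub hA hB]
  have hintg : (∫ x : ℝ,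
        min (((C.filter (fun c => c ≤ x ∧ x < M c)).card : ℝ))
          (((C.filter (fun c => M c ≤ x ∧ x < c)).card : ℝ))) =
      ∫ x, min (Fc C M x) (Bc C M x) :=
    integral_congr_ae (Filter.Eventually.of_forall fun x => by
      show _ = min (Fc C M x) (Bc C M x)
      rw [Fc_card, Bc_card])
  rw [cost_eq C M, hsinf, hintg, hintmin]
  ring
end
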